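/- arXiv:1210.4965 — 2 statements merged into one kernel-verified Lean document; each statement's English description precedes it below -/
import Mathlib

section
/- Consider the pro-3 group G = ⟨z⟩ ⋉ Z_3[ξ], where z has order 3, ξ is a primitive cube root of unity, Z_3[ξ] ≅ Z_3² additively, and z acts as multiplication by ξ. Then G is soluble, its maximal finite normal subgroup is trivial, d(G) = 2 = dim(G), but G is not powerful. -/
open scoped Pointwise


namespace Pro3Aux

abbrev M3 := Multiplicative (ℤ_[3] × ℤ_[3])

lemma topClosure_eq_top_of_dense {G : Type*} [Group G] [TopologicalSpace G]
    [IsTopologicalGroup G] {s : Subgroup G} (h : Dense (s : Set G)) :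
    s.topologicalClosure = ⊤ :=
  SetLike.ext' (by rw [Subgroup.topologicalClosure_coe, h.closure_eq]; rfl)

lemma dense_of_topClosure_eq_top {G : Type*} [Group G] [TopologicalSpace G]
    [IsTopologicalGroup G] {s : Subgroup G} (h : s.topologicalClosure = ⊤) :
    Dense (s : Set G) := by
  have := congrArg (fun t : Subgroup G => (t : Set G)) h
  simp only [Subgroup.topologicalClosure_coe] at this
  rw [dense_iff_closure_eq, this]; rfl

lemma dense_pair :
    (Subgroup.closure ({Multiplicative.ofAdd ((1:ℤ_[3]), (0:ℤ_[3])),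
      Multiplicative.ofAdd ((0:ℤ_[3]), (1:ℤ_[3]))} : Set M3)).topologicalClosure = ⊤ := by
  apply topClosure_eq_top_of_dense
  have hd : DenseRange (fun p : ℤ × ℤ =>
      (Multiplicative.ofAdd (((p.1 : ℤ_[3]), (p.2 : ℤ_[3]))) : M3)) := by
    have h1 : DenseRange (Prod.map (Int.cast : ℤ → ℤ_[3]) (Int.cast : ℤ → ℤ_[3])) :=
      PadicInt.denseRange_intCast.prodMap PadicInt.denseRange_intCast
    have h2 : DenseRange (Multiplicative.ofAdd : ℤ_[3] × ℤ_[3] → M3) :=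
      Function.Surjective.denseRange (fun x => ⟨x.toAdd, rfl⟩)
    exact h2.comp h1 continuous_ofAdd
  refine Dense.mono ?_ hd
  rintro x ⟨⟨m, n⟩, rfl⟩
  have : (Multiplicative.ofAdd (((m : ℤ_[3]), (n : ℤ_[3]))) : M3)
      = (Multiplicative.ofAdd ((1:ℤ_[3]), (0:ℤ_[3])))^m
        * (Multiplicative.ofAdd ((0:ℤ_[3]), (1:ℤ_[3])))^n := by
    rw [← ofAdd_zsmul, ← ofAdd_zsmul, ← ofAdd_add]
    congr 1
    simp [Prod.ext_iff, zsmul_eq_mul]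
  show Multiplicative.ofAdd (((m : ℤ_[3]), (n : ℤ_[3]))) ∈ (Subgroup.closure _ : Subgroup M3)
  rw [this]
  exact Subgroup.mul_mem _
    (Subgroup.zpow_mem _ (Subgroup.subset_closure (by simp)) m)
    (Subgroup.zpow_mem _ (Subgroup.subset_closure (by simp)) n)

lemma map_topClosure_top {G H : Type*} [Group G] [TopologicalSpace G] [IsTopologicalGroup G]
    [Group H] [TopologicalSpace H] [IsTopologicalGroup H]
    (e : G ≃* H) (he : Continuous e) {S : Set G}
    (h : (Subgroup.closure S).topologicalClosure = ⊤) :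
    (Subgroup.closure (⇑e '' S)).topologicalClosure = ⊤ := by
  have := DenseRange.topologicalClosure_map_subgroup (f := e.toMonoidHom) he
    e.surjective.denseRange h
  rwa [MonoidHom.map_closure] at this

lemma three_ne_zero' : (3 : ℤ_[3]) ≠ 0 := by norm_num

lemma pad_pow_small (U : Set (ℤ_[3] × ℤ_[3])) (hU : IsOpen U)
    (h0 : ((0:ℤ_[3]), (0:ℤ_[3])) ∈ U) :
    ∃ k : ℕ, (((3:ℤ_[3])^k, (0:ℤ_[3])) ∈ U ∧ ((0:ℤ_[3]), (3:ℤ_[3])^k) ∈ U) := by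
  obtain ⟨ε, hε, hb⟩ := Metric.isOpen_iff.mp hU _ h0
  obtain ⟨k, hk⟩ := exists_pow_lt_of_lt_one hε (by norm_num : ((3:ℝ)⁻¹) < 1)
  have hn : ‖(3:ℤ_[3])^k‖ < ε := by
    have h1 : ‖((3:ℕ) : ℤ_[3])^k‖ = ((3:ℕ) : ℝ) ^ (-(k:ℤ)) := PadicInt.norm_p_pow k
    have h2 : ((3:ℕ):ℤ_[3]) = (3:ℤ_[3]) := by norm_num
    have h3 : ((3:ℕ):ℝ) ^ (-(k:ℤ)) = ((3:ℝ)⁻¹)^k := by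
      rw [zpow_neg, zpow_natCast, inv_pow]; norm_num
    rw [h2, h3] at h1
    rw [h1]; exact hk
  refine ⟨k, ?_, ?_⟩
  · apply hb
    rw [Metric.mem_ball, Prod.dist_eq]
    simp only [dist_self, dist_zero_right]
    exact max_lt hn hε
  · apply hb
    rw [Metric.mem_ball, Prod.dist_eq]
    simp only [dist_self, dist_zero_right]
    exact max_lt hε hn

lemma not_isOpen_zero_singleton :
    ¬ IsOpen ({((0:ℤ_[3]), (0:ℤ_[3]))} : Set (ℤ_[3] × ℤ_[3])) := by
  intro h
  obtain ⟨k, hk, -⟩ := pad_pow_small _ h rfl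
  rw [Set.mem_singleton_iff, Prod.ext_iff] at hk
  exact pow_ne_zero k three_ne_zero' hk.1

lemma line_trap {w : ℤ_[3] × ℤ_[3]} {k : ℕ} {c d : ℤ_[3]}
    (h1 : c • w = ((3:ℤ_[3])^k, 0)) (h2 : d • w = (0, (3:ℤ_[3])^k)) : False := by
  have e1 : c * w.1 = 3^k := by
    have := congrArg Prod.fst h1; simpa [Prod.smul_fst, smul_eq_mul] using this
  have e2 : c * w.2 = 0 := by
    have := congrArg Prod.snd h1; simpa [Prod.smul_snd, smul_eq_mul] using this
  have e3 : d * w.1 = 0 := by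
    have := congrArg Prod.fst h2; simpa [Prod.smul_fst, smul_eq_mul] using this
  have e4 : d * w.2 = 3^k := by
    have := congrArg Prod.snd h2; simpa [Prod.smul_snd, smul_eq_mul] using this
  have hz : (3:ℤ_[3])^k * 3^k = 0 := by
    calc (3:ℤ_[3])^k * 3^k = (c * w.1) * (d * w.2) := by rw [e1, e4]
    _ = (c * w.2) * (d * w.1) := by ring
    _ = 0 := by rw [e2, zero_mul]
  exact pow_ne_zero k three_ne_zero' (mul_self_eq_zero.mp hz)

end Pro3Aux
namespace Pro3Aux
set_option linter.unusedSectionVars false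
set_option linter.unnecessarySeqFocus false

section Main

variable {G : Type*} [Group G] [TopologicalSpace G] [IsTopologicalGroup G]
variable {A : Subgroup G} {z : G}

lemma Acomm (eA : A ≃* M3) : ∀ a ∈ A, ∀ b ∈ A, a * b = b * a := by
  intro a ha b hb
  have : (⟨a, ha⟩ * ⟨b, hb⟩ : A) = ⟨b, hb⟩ * ⟨a, ha⟩ :=
    eA.injective (by rw [map_mul, map_mul, mul_comm])
  exact congrArg Subtype.val this

lemma torsionA (eA : A ≃* M3) : ∀ x ∈ A, IsOfFinOrder x → x = 1 := by
  intro x hx hfo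
  obtain ⟨n, hn, hxn⟩ := isOfFinOrder_iff_pow_eq_one.mp hfo
  have h1 : (⟨x, hx⟩ : A) ^ n = 1 := Subtype.ext (by simpa using hxn)
  have h2 : (eA ⟨x, hx⟩) ^ n = 1 := by rw [← map_pow, h1, map_one]
  have h3 : Multiplicative.toAdd (eA ⟨x, hx⟩) = 0 := by
    have h4 := congrArg Multiplicative.toAdd h2
    rw [toAdd_pow, toAdd_one] at h4
    set v := Multiplicative.toAdd (eA ⟨x, hx⟩) with hv
    have hv1 : (n : ℤ_[3]) * v.1 = 0 := by
      have := congrArg Prod.fst h4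
      simpa [Nat.cast_smul_eq_nsmul ℤ_[3] n, smul_eq_mul] using
        (by simpa [Prod.smul_fst] using this : n • v.1 = 0)
    have hv2 : (n : ℤ_[3]) * v.2 = 0 := by
      have := congrArg Prod.snd h4
      simpa [Nat.cast_smul_eq_nsmul ℤ_[3] n, smul_eq_mul] using
        (by simpa [Prod.smul_snd] using this : n • v.2 = 0)
    have hcn : (n : ℤ_[3]) ≠ 0 := Nat.cast_ne_zero.mpr hn.ne'
    have : v.1 = 0 := by rcases mul_eq_zero.mp hv1 with h | h; exact absurd h hcn; exact h
    have h5 : v.2 = 0 := by rcases mul_eq_zero.mp hv2 with h | h; exact absurd h hcn; exact h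
    exact Prod.ext this h5
  have h6 : eA ⟨x, hx⟩ = 1 := by
    have := congrArg Multiplicative.ofAdd h3
    simpa using this
  have : (⟨x, hx⟩ : A) = 1 := eA.injective (by rw [h6, map_one])
  exact congrArg Subtype.val this

lemma decomp (hA : A.Normal) (hz3 : z ^ 3 = 1) (hsup : Subgroup.closure {z} ⊔ A = ⊤)
    (g : G) : ∃ (j : ℕ) (a : G), j < 3 ∧ a ∈ A ∧ g = z ^ j * a := by
  haveI := hA
  have hg : g ∈ ((Subgroup.closure {z} ⊔ A : Subgroup G) : Set G) := by
    rw [hsup]; trivial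
  rw [Subgroup.mul_normal] at hg
  obtain ⟨b, hb, a, ha, rfl⟩ := hg
  rw [SetLike.mem_coe, ← Subgroup.zpowers_eq_closure] at hb
  obtain ⟨k, rfl⟩ := Subgroup.mem_zpowers_iff.mp hb
  have h1 : 0 ≤ k % 3 := Int.emod_nonneg k (by norm_num)
  have h2 : k % 3 < 3 := Int.emod_lt_of_pos k (by norm_num)
  refine ⟨(k % 3).toNat, a, by omega, ha, ?_⟩
  have hz3' : z ^ ((3:ℤ)) = 1 := by
    rw [show (3:ℤ) = ((3:ℕ):ℤ) by norm_num, zpow_natCast, hz3]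
  have : z ^ k = z ^ (k % 3) := by
    conv_lhs => rw [← Int.emod_add_mul_ediv k 3]
    rw [zpow_add, zpow_mul, hz3', one_zpow, mul_one]
  rw [this, ← zpow_natCast, Int.toNat_of_nonneg h1]

lemma sum_zero (hA : A.Normal) (eA : A ≃* M3)
    (hact : ∀ a : A, eA ⟨z * a * z⁻¹, hA.conj_mem a a.2 z⟩ =
      Multiplicative.ofAdd (-(Multiplicative.toAdd (eA a)).2,
        (Multiplicative.toAdd (eA a)).1 - (Multiplicative.toAdd (eA a)).2)) (a : A) :
    ((z * ((z * ↑a * z⁻¹)) * z⁻¹) * ((z * ↑a * z⁻¹)) * ↑a = 1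
      ∧ ((z * ↑a * z⁻¹)) * (z * ((z * ↑a * z⁻¹)) * z⁻¹) * ↑a = 1) := by
  set b1 : A := ⟨z * ↑a * z⁻¹, hA.conj_mem a a.2 z⟩ with hb1
  set b2 : A := ⟨z * ↑b1 * z⁻¹, hA.conj_mem b1 b1.2 z⟩ with hb2
  have e1 : eA b1 = Multiplicative.ofAdd (-(Multiplicative.toAdd (eA a)).2,
      (Multiplicative.toAdd (eA a)).1 - (Multiplicative.toAdd (eA a)).2) := hact a
  have e2 := hact b1
  rw [e1] at e2
  simp only [toAdd_ofAdd] at e2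
  set p := (Multiplicative.toAdd (eA a)).1
  set q := (Multiplicative.toAdd (eA a)).2
  have key : b2 * b1 * a = 1 := by
    apply eA.injective
    rw [map_mul, map_mul, map_one, e1, e2, ← ofAdd_toAdd (eA a), ← ofAdd_add, ← ofAdd_add]
    show Multiplicative.ofAdd _ = Multiplicative.ofAdd (0 : ℤ_[3] × ℤ_[3])
    congr 1
    rw [Prod.ext_iff]
    constructor <;> simp <;> ring
  have key2 : b1 * b2 * a = 1 := by
    apply eA.injective
    rw [map_mul, map_mul, map_one, e1, e2, ← ofAdd_toAdd (eA a), ← ofAdd_add, ← ofAdd_add]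
    show Multiplicative.ofAdd _ = Multiplicative.ofAdd (0 : ℤ_[3] × ℤ_[3])
    congr 1
    rw [Prod.ext_iff]
    constructor <;> simp <;> ring
  constructor
  · have := congrArg Subtype.val key
    exact this
  · have := congrArg Subtype.val key2
    exact this

lemma cube_form (hA : A.Normal) (eA : A ≃* M3) (hz3 : z ^ 3 = 1)
    (hact : ∀ a : A, eA ⟨z * a * z⁻¹, hA.conj_mem a a.2 z⟩ =
      Multiplicative.ofAdd (-(Multiplicative.toAdd (eA a)).2,
        (Multiplicative.toAdd (eA a)).1 - (Multiplicative.toAdd (eA a)).2))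
    (j : ℕ) (a : G) (ha : a ∈ A) (hj : j = 1 ∨ j = 2) : (z ^ j * a) ^ 3 = 1 := by
  rcases hj with rfl | rfl
  · have hs := (sum_zero hA eA hact ⟨a, ha⟩).2
    have he : (z ^ 1 * a) ^ 3
        = ((z * a * z⁻¹)) * (z * ((z * a * z⁻¹)) * z⁻¹) * (z ^ 3) * a := by
      simp only [pow_succ, pow_zero, one_mul, mul_assoc, mul_inv_rev, inv_mul_cancel_left, mul_inv_cancel_left]
    rw [hz3, mul_one] at he
    rw [he]
    exact hs
  · have hs := (sum_zero hA eA hact ⟨a, ha⟩).1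
    have he : (z ^ 2 * a) ^ 3
        = (z * ((z * a * z⁻¹)) * z⁻¹) * ((z ^ 3) * ((z * a * z⁻¹)) * (z ^ 3)⁻¹)
          * (z ^ 3) ^ 2 * a := by
      simp only [pow_succ, pow_zero, one_mul, mul_assoc, mul_inv_rev, inv_mul_cancel_left, mul_inv_cancel_left]
    rw [hz3] at he
    simp only [one_mul, inv_one, mul_one, one_pow] at he
    rw [he]
    exact hs

lemma cube_notA (hA : A.Normal) (eA : A ≃* M3) (hz3 : z ^ 3 = 1)
    (hsup : Subgroup.closure {z} ⊔ A = ⊤)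
    (hact : ∀ a : A, eA ⟨z * a * z⁻¹, hA.conj_mem a a.2 z⟩ =
      Multiplicative.ofAdd (-(Multiplicative.toAdd (eA a)).2,
        (Multiplicative.toAdd (eA a)).1 - (Multiplicative.toAdd (eA a)).2))
    (g : G) (hg : g ∉ A) : g ^ 3 = 1 := by
  obtain ⟨j, a, hj, ha, rfl⟩ := decomp hA hz3 hsup g
  have hj' : j = 1 ∨ j = 2 := by
    have h0 : j ≠ 0 := by rintro rfl; exact hg (by simpa using ha)
    omega
  exact cube_form hA eA hz3 hact j a ha hj'

end Main

end Pro3Aux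
namespace Pro3Aux
set_option linter.unusedSectionVars false

section Main2

variable {G : Type*} [Group G] [TopologicalSpace G] [IsTopologicalGroup G]
variable {A : Subgroup G} {z : G}

lemma notcyclic (eA : A ≃* M3) (heA : Continuous eA) (heA' : Continuous eA.symm)
    (hcs : CompactSpace G) (ht2 : T2Space G)
    {H : Subgroup G} (hHA : H ≤ A) (hHopen : IsOpen (H : Set G)) (h : H)
    (htop : (Subgroup.closure {h}).topologicalClosure = ⊤) : False := by
  haveI := hcs; haveI := ht2
  haveI : CompactSpace H :=
    isCompact_iff_compactSpace.mp ((H.isClosed_of_isOpen hHopen).isCompact)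
  haveI : T2Space M3 := inferInstanceAs (T2Space (ℤ_[3] × ℤ_[3]))
  have hinc : Continuous (Subgroup.inclusion hHA : H → A) :=
    Continuous.subtype_mk continuous_subtype_val _
  set ψ : H →* M3 := eA.toMonoidHom.comp (Subgroup.inclusion hHA) with hψ
  have hψc : Continuous ψ := heA.comp hinc
  set w := Multiplicative.toAdd (ψ h) with hw
  set L : Set M3 := Set.range (fun c : ℤ_[3] => Multiplicative.ofAdd (c • w)) with hL
  have hLc : IsClosed L := by
    have : Continuous (fun c : ℤ_[3] => Multiplicative.ofAdd (c • w)) :=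
      continuous_ofAdd.comp (continuous_id.smul continuous_const)
    exact (isCompact_range this).isClosed
  have hrange : ∀ x : H, ψ x ∈ L := by
    intro x
    have hd : ψ x ∈ closure (⇑ψ '' ((Subgroup.closure {h} : Subgroup H) : Set H)) := by
      have hx : x ∈ closure ((Subgroup.closure {h} : Subgroup H) : Set H) :=
        dense_of_topClosure_eq_top htop x
      exact (image_closure_subset_closure_image hψc) ⟨x, hx, rfl⟩
    have hsub : ⇑ψ '' ((Subgroup.closure {h} : Subgroup H) : Set H) ⊆ L := by
      rintro y ⟨u, hu, rfl⟩
      rw [SetLike.mem_coe, ← Subgroup.zpowers_eq_closure] at hu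
      obtain ⟨k, rfl⟩ := Subgroup.mem_zpowers_iff.mp hu
      refine ⟨(k : ℤ_[3]), ?_⟩
      show Multiplicative.ofAdd ((k : ℤ_[3]) • w) = ψ (h ^ k)
      rw [Int.cast_smul_eq_zsmul, hw, ofAdd_zsmul, ofAdd_toAdd, ← map_zpow]
    have := closure_mono hsub hd
    rwa [hLc.closure_eq] at this
  set f : ℤ_[3] × ℤ_[3] → G := fun v => ((eA.symm (Multiplicative.ofAdd v) : A) : G) with hf
  have hfc : Continuous f := continuous_subtype_val.comp (heA'.comp continuous_ofAdd)
  have hU : IsOpen (f ⁻¹' (H : Set G)) := hHopen.preimage hfc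
  have h0 : ((0:ℤ_[3]), (0:ℤ_[3])) ∈ f ⁻¹' (H : Set G) := by
    show ((eA.symm (Multiplicative.ofAdd ((0:ℤ_[3]), (0:ℤ_[3]))) : A) : G) ∈ H
    have h1 : Multiplicative.ofAdd ((0:ℤ_[3]), (0:ℤ_[3])) = (1 : M3) := rfl
    rw [h1, map_one]
    simpa using H.one_mem
  obtain ⟨k, hk1, hk2⟩ := pad_pow_small _ hU h0
  have key : ∀ v : ℤ_[3] × ℤ_[3], f v ∈ H → ∃ c : ℤ_[3], c • w = v := by
    intro v hv
    have heq : ψ ⟨f v, hv⟩ = Multiplicative.ofAdd v := by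
      show eA (Subgroup.inclusion hHA ⟨f v, hv⟩) = Multiplicative.ofAdd v
      have h2 : Subgroup.inclusion hHA ⟨f v, hv⟩ = eA.symm (Multiplicative.ofAdd v) :=
        Subtype.ext rfl
      rw [h2, MulEquiv.apply_symm_apply]
    obtain ⟨c, hc⟩ := hrange ⟨f v, hv⟩
    rw [heq] at hc
    exact ⟨c, by simpa using congrArg Multiplicative.toAdd hc⟩
  obtain ⟨c, hc⟩ := key _ hk1
  obtain ⟨d, hd⟩ := key _ hk2
  exact line_trap hc hd

end Main2

end Pro3Aux

/-- The minimal size of a topological generating set. -/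
noncomputable def topGen (G : Type*) [Group G] [TopologicalSpace G] [IsTopologicalGroup G] : ℕ :=
  sInf {n | ∃ S : Finset G, S.card = n ∧ (Subgroup.closure (S : Set G)).topologicalClosure = ⊤}

/-- Topologically finitely generated. -/
def TopFG (G : Type*) [Group G] [TopologicalSpace G] [IsTopologicalGroup G] : Prop :=
  ∃ S : Finset G, (Subgroup.closure (S : Set G)).topologicalClosure = ⊤

/-- A pro-`p` group: a compact, totally disconnected Hausdorff topological group in which
every open normal subgroup has index a power of `p`. -/
def IsProP (p : ℕ) (G : Type*) [Group G] [TopologicalSpace G] [IsTopologicalGroup G] : Prop :=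
  CompactSpace G ∧ TotallyDisconnectedSpace G ∧ T2Space G ∧
    ∀ N : Subgroup G, N.Normal → IsOpen (N : Set G) → ∃ k : ℕ, N.index = p ^ k

/-- The closed subgroup (topologically) generated by all `p`-th powers. -/
def pPow (p : ℕ) (G : Type*) [Group G] [TopologicalSpace G] [IsTopologicalGroup G] : Subgroup G :=
  (Subgroup.closure {x : G | ∃ g : G, g ^ p = x}).topologicalClosure

/-- The closed subgroup generated by the `p`-th powers of elements of a subgroup `N`. -/
def pPowIn (p : ℕ) {G : Type*} [Group G] [TopologicalSpace G] [IsTopologicalGroup G]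
    (N : Subgroup G) : Subgroup G :=
  (Subgroup.closure {x : G | ∃ g ∈ N, g ^ p = x}).topologicalClosure

/-- Powerful: `[G,G] ≤ G^p` (closures) for odd `p`, and `[G,G] ≤ G^4` for `p = 2`. -/
def Powerful (p : ℕ) (G : Type*) [Group G] [TopologicalSpace G] [IsTopologicalGroup G] : Prop :=
  (commutator G).topologicalClosure ≤ pPow (if p = 2 then 4 else p) G

/-- Uniform: topologically finitely generated, powerful and torsion-free. -/
def Uniform (p : ℕ) (G : Type*) [Group G] [TopologicalSpace G] [IsTopologicalGroup G] : Prop :=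
  TopFG G ∧ Powerful p G ∧ (∀ g : G, g ≠ 1 → ¬IsOfFinOrder g)

/-- Finite rank: a common bound on the number of topological generators of closed subgroups. -/
def FiniteRank (G : Type*) [Group G] [TopologicalSpace G] [IsTopologicalGroup G] : Prop :=
  ∃ r : ℕ, ∀ H : Subgroup G, IsClosed (H : Set G) → topGen H ≤ r

/-- The dimension of a `p`-adic analytic pro-`p` group: `d(U)` for any uniform open subgroup `U`. -/
noncomputable def dimension (p : ℕ) (G : Type*) [Group G] [TopologicalSpace G]
    [IsTopologicalGroup G] : ℕ :=
  sInf {n | ∃ H : Subgroup G, IsOpen (H : Set G) ∧ Uniform p H ∧ topGen H = n}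

/-- Example 2.3: the pro-`3` group `G = ⟨z⟩ ⋉ ℤ₃[ξ]` with `z` of order `3` acting as
multiplication by a primitive cube root of unity `ξ` (so that on `ℤ₃² = ℤ₃ + ℤ₃ξ` it sends
`(a, b)` to `(-b, a - b)`) is soluble with trivial periodic radical and
`d(G) = 2 = dim(G)`, but not powerful. -/
theorem pro3_example
    (G : Type*) [Group G] [TopologicalSpace G] [IsTopologicalGroup G] (hpro : IsProP 3 G)
    (A : Subgroup G) (hA : A.Normal)
    (eA : A ≃* Multiplicative (ℤ_[3] × ℤ_[3]))
    (heA : Continuous eA) (heA' : Continuous eA.symm)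
    (z : G) (hz1 : z ≠ 1) (hz3 : z ^ 3 = 1)
    (hsup : Subgroup.closure {z} ⊔ A = ⊤)
    (hinf : Subgroup.closure {z} ⊓ A = ⊥)
    (hact : ∀ a : A, eA ⟨z * a * z⁻¹, hA.conj_mem a a.2 z⟩ =
      Multiplicative.ofAdd (-(Multiplicative.toAdd (eA a)).2,
        (Multiplicative.toAdd (eA a)).1 - (Multiplicative.toAdd (eA a)).2)) :
    IsSolvable G ∧ (∀ N : Subgroup G, N.Normal → (N : Set G).Finite → N = ⊥) ∧
      topGen G = 2 ∧ dimension 3 G = 2 ∧ ¬ Powerful 3 G := by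
  classical
  obtain ⟨hcs, htd, ht2, hidx⟩ := hpro
  haveI := hcs; haveI := ht2; haveI := hA
  haveI : CompactSpace Pro3Aux.M3 := inferInstanceAs (CompactSpace (ℤ_[3] × ℤ_[3]))
  haveI : T2Space Pro3Aux.M3 := inferInstanceAs (T2Space (ℤ_[3] × ℤ_[3]))
  set g1 : Pro3Aux.M3 := Multiplicative.ofAdd ((1:ℤ_[3]), (0:ℤ_[3])) with hg1
  set g2 : Pro3Aux.M3 := Multiplicative.ofAdd ((0:ℤ_[3]), (1:ℤ_[3])) with hg2
  set a0 : A := eA.symm g1 with ha0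
  have hx0A : (a0 : G) ∈ A := a0.2
  have ea0 : eA a0 = g1 := eA.apply_symm_apply g1
  have hb1mem : z * ↑a0 * z⁻¹ ∈ A := hA.conj_mem _ hx0A z
  have e_b1 : eA ⟨z * ↑a0 * z⁻¹, hb1mem⟩ = g2 := by
    have h5 := hact a0
    rw [ea0] at h5
    simpa [hg1, hg2] using h5
  have hb2mem : z * (z * ↑a0 * z⁻¹) * z⁻¹ ∈ A := hA.conj_mem _ hb1mem z
  have e_b2 : eA ⟨z * (z * ↑a0 * z⁻¹) * z⁻¹, hb2mem⟩
      = Multiplicative.ofAdd ((-1:ℤ_[3]), (-1:ℤ_[3])) := by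
    have h5 := hact ⟨z * ↑a0 * z⁻¹, hb1mem⟩
    rw [e_b1] at h5
    simpa [hg2] using h5
  have hzx : z * ↑a0 * z⁻¹ ≠ ↑a0 := by
    intro hEq
    have h6 : eA (⟨z * ↑a0 * z⁻¹, hb1mem⟩ : A) = eA a0 := congrArg eA (Subtype.ext hEq)
    rw [e_b1, ea0] at h6
    have h7 := congrArg Multiplicative.toAdd h6
    simp only [hg1, hg2, toAdd_ofAdd, Prod.mk.injEq] at h7
    exact zero_ne_one h7.1
  have hz2x : z * (z * ↑a0 * z⁻¹) * z⁻¹ ≠ ↑a0 := by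
    intro hEq
    have h6 : eA (⟨z * (z * ↑a0 * z⁻¹) * z⁻¹, hb2mem⟩ : A) = eA a0 := congrArg eA (Subtype.ext hEq)
    rw [e_b2, ea0] at h6
    have h7 := congrArg Multiplicative.toAdd h6
    simp only [hg1, toAdd_ofAdd, Prod.mk.injEq] at h7
    exact neg_ne_zero.mpr one_ne_zero h7.2
  have hznA : z ∉ A := by
    intro hz
    have h8 : z ∈ Subgroup.closure {z} ⊓ A :=
      ⟨Subgroup.subset_closure (Set.mem_singleton z), hz⟩
    rw [hinf] at h8
    exact hz1 (Subgroup.mem_bot.mp h8)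
  have hz2nA : z * z ∉ A := by
    intro hzz
    have h8 : z * z ∈ Subgroup.closure {z} ⊓ A :=
      ⟨Subgroup.mul_mem _ (Subgroup.subset_closure (Set.mem_singleton z))
        (Subgroup.subset_closure (Set.mem_singleton z)), hzz⟩
    rw [hinf] at h8
    have h9 : z * z = 1 := Subgroup.mem_bot.mp h8
    apply hz1
    have h10 : z ^ 3 = z * (z * z) := by rw [pow_succ, pow_succ, pow_one, mul_assoc]
    rw [h9, mul_one, hz3] at h10
    exact h10.symm
  -- A is closed and open
  have hAcl : IsClosed (A : Set G) := by
    have hAr : (A : Set G) = Set.range (fun v : Pro3Aux.M3 => ((eA.symm v : A) : G)) := by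
      ext x
      constructor
      · intro hx; exact ⟨eA ⟨x, hx⟩, by simp⟩
      · rintro ⟨v, rfl⟩; exact (eA.symm v).2
    rw [hAr]
    exact (isCompact_range (continuous_subtype_val.comp heA')).isClosed
  have hAopen : IsOpen (A : Set G) := by
    rw [← isClosed_compl_iff]
    have hcompl : (A : Set G)ᶜ
        = (fun g => z * g) '' (A : Set G) ∪ (fun g => z * z * g) '' (A : Set G) := by
      ext g
      simp only [Set.mem_compl_iff, SetLike.mem_coe, Set.mem_union, Set.mem_image]
      constructor
      · intro hg
        obtain ⟨j, a, hj, ha, rfl⟩ := Pro3Aux.decomp hA hz3 hsup g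
        rcases (by omega : j = 0 ∨ j = 1 ∨ j = 2) with rfl | rfl | rfl
        · exact absurd (by simpa using ha) hg
        · exact Or.inl ⟨a, ha, by rw [pow_one]⟩
        · exact Or.inr ⟨a, ha, by rw [pow_two]⟩
      · rintro (⟨a, ha, rfl⟩ | ⟨a, ha, rfl⟩)
        · intro hmem
          exact hznA (by
            have h11 : z * a * a⁻¹ ∈ A := A.mul_mem hmem (A.inv_mem ha)
            simpa [mul_assoc] using h11)
        · intro hmem
          exact hz2nA (by
            have h11 : z * z * a * a⁻¹ ∈ A := A.mul_mem hmem (A.inv_mem ha)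
            simpa [mul_assoc] using h11)
    rw [hcompl]
    exact IsClosed.union ((Homeomorph.mulLeft z).isClosedMap _ hAcl)
      ((Homeomorph.mulLeft (z * z)).isClosedMap _ hAcl)
  -- solvability
  have hsolv : IsSolvable G := by
    haveI h1 : Group.IsSolvable A :=
      isSolvable_of_comm fun a b => Subtype.ext (Pro3Aux.Acomm eA _ a.2 _ b.2)
    haveI h2 : Group.IsSolvable (G ⧸ A) := by
      apply isSolvable_of_comm
      intro x y
      obtain ⟨gx, rfl⟩ := QuotientGroup.mk'_surjective A x
      obtain ⟨gy, rfl⟩ := QuotientGroup.mk'_surjective A y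
      obtain ⟨j, a, hj, ha, rfl⟩ := Pro3Aux.decomp hA hz3 hsup gx
      obtain ⟨l, b, hl, hb, rfl⟩ := Pro3Aux.decomp hA hz3 hsup gy
      have hma : (QuotientGroup.mk' A) a = 1 := (QuotientGroup.eq_one_iff a).mpr ha
      have hmb : (QuotientGroup.mk' A) b = 1 := (QuotientGroup.eq_one_iff b).mpr hb
      rw [map_mul, map_mul, map_pow, map_pow, hma, hmb, mul_one, mul_one, pow_mul_comm]
    exact solvable_of_ker_le_range A.subtype (QuotientGroup.mk' A)
      (by rw [QuotientGroup.ker_mk', Subgroup.range_subtype])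
  -- periodic radical
  have hrad : ∀ N : Subgroup G, N.Normal → (N : Set G).Finite → N = ⊥ := by
    intro N hN hfin
    rw [eq_bot_iff]
    intro n hn
    rw [Subgroup.mem_bot]
    haveI : Finite (N : Set G) := hfin.to_subtype
    have hfo : ∀ m ∈ N, IsOfFinOrder m := by
      intro m hm
      have h12 : IsOfFinOrder (⟨m, hm⟩ : N) := isOfFinOrder_of_finite _
      exact N.subtype.isOfFinOrder h12
    have hcomm : ∀ a ∈ A, n * a = a * n := by
      intro a ha
      have hA1 : n * a * n⁻¹ * a⁻¹ ∈ A := A.mul_mem (hA.conj_mem a ha n) (A.inv_mem ha)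
      have hN1 : n * a * n⁻¹ * a⁻¹ ∈ N := by
        have h13 : a * n⁻¹ * a⁻¹ ∈ N := hN.conj_mem _ (N.inv_mem hn) a
        have h14 := N.mul_mem hn h13
        simpa [mul_assoc] using h14
      have h15 : n * a * n⁻¹ * a⁻¹ = 1 := Pro3Aux.torsionA eA _ hA1 (hfo _ hN1)
      have h16 : n * a * n⁻¹ = a := mul_inv_eq_one.mp h15
      calc n * a = (n * a * n⁻¹) * n := by rw [inv_mul_cancel_right]
      _ = a * n := by rw [h16]
    obtain ⟨j, a, hj, ha, rfl⟩ := Pro3Aux.decomp hA hz3 hsup n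
    have hj0 : j = 0 := by
      by_contra hj'
      have h17 := hcomm _ hx0A
      have hax : a * ↑a0 = ↑a0 * a := Pro3Aux.Acomm eA _ ha _ hx0A
      have h19 : (z ^ j * ↑a0) * a = (↑a0 * z ^ j) * a := by
        calc (z ^ j * ↑a0) * a = z ^ j * (↑a0 * a) := by rw [mul_assoc]
        _ = z ^ j * (a * ↑a0) := by rw [hax]
        _ = (z ^ j * a) * ↑a0 := by rw [mul_assoc]
        _ = ↑a0 * (z ^ j * a) := h17
        _ = (↑a0 * z ^ j) * a := by rw [mul_assoc]
      have h18 : z ^ j * ↑a0 = ↑a0 * z ^ j := mul_right_cancel h19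
      have h20 : z ^ j * ↑a0 * (z ^ j)⁻¹ = ↑a0 := by rw [h18, mul_inv_cancel_right]
      rcases (by omega : j = 1 ∨ j = 2) with rfl | rfl
      · rw [pow_one] at h20; exact hzx h20
      · have h21 : z * (z * ↑a0 * z⁻¹) * z⁻¹ = z ^ 2 * ↑a0 * (z ^ 2)⁻¹ := by
          rw [pow_two, mul_inv_rev]
          simp [mul_assoc]
        exact hz2x (h21.trans h20)
    subst hj0
    rw [pow_zero, one_mul] at hn ⊢
    exact Pro3Aux.torsionA eA _ ha (hfo _ hn)
  -- topGen G = 2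
  have hmem2 : ∃ S : Finset G, S.card = 2
      ∧ (Subgroup.closure (S : Set G)).topologicalClosure = ⊤ := by
    refine ⟨{z, ↑a0}, ?_, ?_⟩
    · rw [Finset.card_insert_of_notMem (by
        simp only [Finset.mem_singleton]
        exact fun h => hznA (h ▸ hx0A)), Finset.card_singleton]
    · have hcoe : (({z, ↑a0} : Finset G) : Set G) = {z, ↑a0} := by simp
      rw [hcoe, eq_top_iff, ← hsup]
      set C := (Subgroup.closure ({z, ↑a0} : Set G)).topologicalClosure with hC
      refine sup_le ?_ ?_
      · exact le_trans (Subgroup.closure_mono (by simp : ({z}:Set G) ⊆ {z, ↑a0}))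
          (Subgroup.le_topologicalClosure _)
      · intro a ha
        set F : Pro3Aux.M3 →* G := A.subtype.comp eA.symm.toMonoidHom with hF
        have hFc : Continuous F := continuous_subtype_val.comp heA'
        have hDcl : IsClosed ((C.comap F : Subgroup Pro3Aux.M3) : Set Pro3Aux.M3) := by
          rw [Subgroup.coe_comap]
          exact (Subgroup.isClosed_topologicalClosure _).preimage hFc
        have hzC : z ∈ C :=
          Subgroup.le_topologicalClosure _ (Subgroup.subset_closure (by simp))
        have hxC : (↑a0 : G) ∈ C :=
          Subgroup.le_topologicalClosure _ (Subgroup.subset_closure (by simp))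
        have hg1D : g1 ∈ C.comap F := by
          show F g1 ∈ C
          have : F g1 = ↑a0 := rfl
          rw [this]; exact hxC
        have hg2D : g2 ∈ C.comap F := by
          show F g2 ∈ C
          have h22 : eA.symm g2 = (⟨z * ↑a0 * z⁻¹, hb1mem⟩ : A) := by
            rw [← e_b1, MulEquiv.symm_apply_apply]
          have h23 : F g2 = z * ↑a0 * z⁻¹ := by
            show ((eA.symm g2 : A) : G) = _
            rw [h22]
          rw [h23]
          exact C.mul_mem (C.mul_mem hzC hxC) (C.inv_mem hzC)
        have hD : C.comap F = ⊤ := by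
          rw [eq_top_iff, ← Pro3Aux.dense_pair]
          refine Subgroup.topologicalClosure_minimal _ ((Subgroup.closure_le _).mpr ?_) hDcl
          intro y hy
          rcases hy with rfl | hy
          · exact hg1D
          · rw [Set.mem_singleton_iff] at hy; subst hy; exact hg2D
        have h24 : eA ⟨a, ha⟩ ∈ C.comap F := hD ▸ Subgroup.mem_top _
        have h25 : F (eA ⟨a, ha⟩) ∈ C := h24
        have h26 : F (eA ⟨a, ha⟩) = a := by
          show ((eA.symm (eA ⟨a, ha⟩) : A) : G) = a
          rw [MulEquiv.symm_apply_apply]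
        rwa [h26] at h25
  have hnot0 : ¬ (∃ S : Finset G, S.card = 0
      ∧ (Subgroup.closure (S : Set G)).topologicalClosure = ⊤) := by
    rintro ⟨S, hS0, hSd⟩
    rw [Finset.card_eq_zero.mp hS0] at hSd
    rw [Finset.coe_empty, Subgroup.closure_empty] at hSd
    have hdense := Pro3Aux.dense_of_topClosure_eq_top hSd
    rw [Subgroup.coe_bot] at hdense
    have h27 : ({1} : Set G) = Set.univ := by
      rw [← isClosed_singleton.closure_eq]
      exact hdense.closure_eq
    exact hz1 (Set.mem_singleton_iff.mp (h27.symm ▸ Set.mem_univ z))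
  have hnot1 : ¬ (∃ S : Finset G, S.card = 1
      ∧ (Subgroup.closure (S : Set G)).topologicalClosure = ⊤) := by
    rintro ⟨S, hS1, hSd⟩
    obtain ⟨g, rfl⟩ := Finset.card_eq_one.mp hS1
    rw [Finset.coe_singleton] at hSd
    have hcomm : ∀ x y : (Subgroup.closure ({g} : Set G)), x * y = y * x := by
      rintro ⟨x, hx⟩ ⟨y, hy⟩
      rw [← Subgroup.zpowers_eq_closure] at hx hy
      obtain ⟨k, rfl⟩ := Subgroup.mem_zpowers_iff.mp hx
      obtain ⟨l, rfl⟩ := Subgroup.mem_zpowers_iff.mp hy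
      exact Subtype.ext (by
        show g ^ k * g ^ l = g ^ l * g ^ k
        rw [← zpow_add, ← zpow_add, add_comm])
    letI : CommGroup (Subgroup.closure ({g} : Set G)).topologicalClosure :=
      Subgroup.commGroupTopologicalClosure _ hcomm
    have hzC : z ∈ (Subgroup.closure ({g} : Set G)).topologicalClosure :=
      hSd ▸ Subgroup.mem_top z
    have hxC : (↑a0 : G) ∈ (Subgroup.closure ({g} : Set G)).topologicalClosure :=
      hSd ▸ Subgroup.mem_top _
    have hcomm2 : z * ↑a0 = ↑a0 * z := by
      have h28 := mul_comm
        (⟨z, hzC⟩ : (Subgroup.closure ({g} : Set G)).topologicalClosure) ⟨↑a0, hxC⟩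
      exact congrArg Subtype.val h28
    exact hzx (by rw [hcomm2, mul_inv_cancel_right])
  have htopG : topGen G = 2 := by
    have hle : sInf {n | ∃ S : Finset G, S.card = n
        ∧ (Subgroup.closure (S : Set G)).topologicalClosure = ⊤} ≤ 2 := Nat.sInf_le hmem2
    have hne : {n | ∃ S : Finset G, S.card = n
        ∧ (Subgroup.closure (S : Set G)).topologicalClosure = ⊤}.Nonempty := ⟨2, hmem2⟩
    have hm := Nat.sInf_mem hne
    show sInf {n | ∃ S : Finset G, S.card = n
      ∧ (Subgroup.closure (S : Set G)).topologicalClosure = ⊤} = 2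
    set m := sInf {n | ∃ S : Finset G, S.card = n
        ∧ (Subgroup.closure (S : Set G)).topologicalClosure = ⊤} with hmdef
    have h0' : m ≠ 0 := fun h => hnot0 (h ▸ hm)
    have h1' : m ≠ 1 := fun h => hnot1 (h ▸ hm)
    omega
  refine ⟨hsolv, hrad, htopG, ?_, ?_⟩
  · -- dimension 3 G = 2
    have hAmem2 : ∃ S : Finset A, S.card = 2
        ∧ (Subgroup.closure (S : Set A)).topologicalClosure = ⊤ := by
      have hne12 : eA.symm g1 ≠ eA.symm g2 := by
        intro h
        have h' := congrArg eA h
        rw [MulEquiv.apply_symm_apply, MulEquiv.apply_symm_apply] at h'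
        have h'' := congrArg Multiplicative.toAdd h'
        simp only [hg1, hg2, toAdd_ofAdd, Prod.mk.injEq] at h''
        exact one_ne_zero h''.1
      refine ⟨{eA.symm g1, eA.symm g2}, ?_, ?_⟩
      · rw [Finset.card_insert_of_notMem (by simpa using hne12), Finset.card_singleton]
      · have hcoe : (({eA.symm g1, eA.symm g2} : Finset A) : Set A)
            = ⇑(eA.symm) '' {g1, g2} := by
          simp [Set.image_insert_eq]
        rw [hcoe]
        exact Pro3Aux.map_topClosure_top eA.symm heA'
          (by rw [hg1, hg2]; exact Pro3Aux.dense_pair)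
    have hAnot0 : ¬ (∃ S : Finset A, S.card = 0
        ∧ (Subgroup.closure (S : Set A)).topologicalClosure = ⊤) := by
      rintro ⟨S, hS0, hSd⟩
      rw [Finset.card_eq_zero.mp hS0] at hSd
      rw [Finset.coe_empty, Subgroup.closure_empty] at hSd
      have hdense := Pro3Aux.dense_of_topClosure_eq_top hSd
      rw [Subgroup.coe_bot] at hdense
      have h27 : ({1} : Set A) = Set.univ := by
        rw [← isClosed_singleton.closure_eq]; exact hdense.closure_eq
      have h28 : a0 = 1 := Set.mem_singleton_iff.mp (h27.symm ▸ Set.mem_univ a0)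
      have h29 := congrArg eA h28
      rw [ea0, map_one] at h29
      have h30 := congrArg Multiplicative.toAdd h29
      simp only [hg1, toAdd_ofAdd, toAdd_one] at h30
      exact one_ne_zero (congrArg Prod.fst h30)
    have hAnot1 : ¬ (∃ S : Finset A, S.card = 1
        ∧ (Subgroup.closure (S : Set A)).topologicalClosure = ⊤) := by
      rintro ⟨S, hS1, hSd⟩
      obtain ⟨h, rfl⟩ := Finset.card_eq_one.mp hS1
      rw [Finset.coe_singleton] at hSd
      exact Pro3Aux.notcyclic eA heA heA' ‹_› ‹_› le_rfl hAopen h hSd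
    have htopA : topGen A = 2 := by
      have hle : sInf {n | ∃ S : Finset A, S.card = n
          ∧ (Subgroup.closure (S : Set A)).topologicalClosure = ⊤} ≤ 2 := Nat.sInf_le hAmem2
      have hne : {n | ∃ S : Finset A, S.card = n
          ∧ (Subgroup.closure (S : Set A)).topologicalClosure = ⊤}.Nonempty := ⟨2, hAmem2⟩
      have hm := Nat.sInf_mem hne
      show sInf {n | ∃ S : Finset A, S.card = n
        ∧ (Subgroup.closure (S : Set A)).topologicalClosure = ⊤} = 2
      set m := sInf {n | ∃ S : Finset A, S.card = n
          ∧ (Subgroup.closure (S : Set A)).topologicalClosure = ⊤} with hmdef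
      have h0' : m ≠ 0 := fun h => hAnot0 (h ▸ hm)
      have h1' : m ≠ 1 := fun h => hAnot1 (h ▸ hm)
      omega
    have hUA : Uniform 3 A := by
      refine ⟨⟨hAmem2.choose, hAmem2.choose_spec.2⟩, ?_, ?_⟩
      · unfold Powerful
        rw [if_neg (by norm_num : ¬((3:ℕ) = 2))]
        have hcb : commutator A = ⊥ := by
          rw [commutator_def, eq_bot_iff]
          refine Subgroup.commutator_le.mpr ?_
          intro p _ q _
          refine Subgroup.mem_bot.mpr (commutatorElement_eq_one_iff_commute.mpr ?_)
          exact Subtype.ext (Pro3Aux.Acomm eA _ p.2 _ q.2)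
        rw [hcb]
        refine le_trans (Subgroup.topologicalClosure_minimal _ le_rfl ?_) bot_le
        rw [Subgroup.coe_bot]; exact isClosed_singleton
      · intro x hx hfo
        exact hx (Subtype.ext (Pro3Aux.torsionA eA _ x.2 (A.subtype.isOfFinOrder hfo)))
    have hdmem2 : ∃ H : Subgroup G, IsOpen (H : Set G) ∧ Uniform 3 H ∧ topGen H = 2 :=
      ⟨A, hAopen, hUA, htopA⟩
    have hdnot0 : ¬ (∃ H : Subgroup G, IsOpen (H : Set G) ∧ Uniform 3 H ∧ topGen H = 0) := by
      rintro ⟨H, hHo, hHu, hHt⟩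
      obtain ⟨⟨S, hS⟩, -, -⟩ := hHu
      have hne : {n | ∃ S : Finset H, S.card = n
          ∧ (Subgroup.closure (S : Set H)).topologicalClosure = ⊤}.Nonempty :=
        ⟨S.card, S, rfl, hS⟩
      have hm := Nat.sInf_mem hne
      have hs0 : sInf {n | ∃ S : Finset H, S.card = n
          ∧ (Subgroup.closure (S : Set H)).topologicalClosure = ⊤} = 0 := hHt
      rw [hs0] at hm
      obtain ⟨S0, hS0, hS0d⟩ := hm
      rw [Finset.card_eq_zero.mp hS0] at hS0d
      rw [Finset.coe_empty, Subgroup.closure_empty] at hS0d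
      have hdense := Pro3Aux.dense_of_topClosure_eq_top hS0d
      rw [Subgroup.coe_bot] at hdense
      have h27 : ({1} : Set H) = Set.univ := by
        rw [← isClosed_singleton.closure_eq]; exact hdense.closure_eq
      have hHone : (H : Set G) = {1} := by
        ext x
        simp only [SetLike.mem_coe, Set.mem_singleton_iff]
        constructor
        · intro hx
          have h31 : (⟨x, hx⟩ : H) ∈ ({1} : Set H) := h27.symm ▸ Set.mem_univ _
          exact congrArg Subtype.val (Set.mem_singleton_iff.mp h31)
        · rintro rfl; exact H.one_mem
      rw [hHone] at hHo
      set f : ℤ_[3] × ℤ_[3] → G := fun v => ((eA.symm (Multiplicative.ofAdd v) : A) : G) with hf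
      have hfc : Continuous f := continuous_subtype_val.comp (heA'.comp continuous_ofAdd)
      have hpre : f ⁻¹' {1} = {((0:ℤ_[3]), (0:ℤ_[3]))} := by
        ext v
        simp only [Set.mem_preimage, Set.mem_singleton_iff]
        constructor
        · intro hv
          have h31 : eA.symm (Multiplicative.ofAdd v) = 1 := Subtype.ext (by simpa [hf] using hv)
          have h32 := congrArg eA h31
          rw [MulEquiv.apply_symm_apply, map_one] at h32
          have h33 := congrArg Multiplicative.toAdd h32
          exact (by simpa using h33 : v = 0)
        · rintro rfl
          show ((eA.symm (Multiplicative.ofAdd ((0:ℤ_[3]), (0:ℤ_[3]))) : A) : G) = 1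
          have h34 : Multiplicative.ofAdd ((0:ℤ_[3]), (0:ℤ_[3])) = (1 : Pro3Aux.M3) := rfl
          rw [h34, map_one, OneMemClass.coe_one]
      exact Pro3Aux.not_isOpen_zero_singleton (hpre ▸ hHo.preimage hfc)
    have hdnot1 : ¬ (∃ H : Subgroup G, IsOpen (H : Set G) ∧ Uniform 3 H ∧ topGen H = 1) := by
      rintro ⟨H, hHo, hHu, hHt⟩
      obtain ⟨⟨S, hS⟩, -, htf⟩ := hHu
      have hHA : H ≤ A := by
        by_contra hnot
        obtain ⟨x, hxH, hxA⟩ := SetLike.not_le_iff_exists.mp hnot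
        have hx3 : x ^ 3 = 1 := Pro3Aux.cube_notA hA eA hz3 hsup hact x hxA
        have hx1 : (⟨x, hxH⟩ : H) ≠ 1 := by
          intro h
          exact hxA (by rw [show x = 1 from congrArg Subtype.val h]; exact A.one_mem)
        refine htf ⟨x, hxH⟩ hx1 (isOfFinOrder_iff_pow_eq_one.mpr ⟨3, by norm_num, ?_⟩)
        exact Subtype.ext (by simpa using hx3)
      have hne : {n | ∃ S : Finset H, S.card = n
          ∧ (Subgroup.closure (S : Set H)).topologicalClosure = ⊤}.Nonempty :=
        ⟨S.card, S, rfl, hS⟩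
      have hm := Nat.sInf_mem hne
      have hs1 : sInf {n | ∃ S : Finset H, S.card = n
          ∧ (Subgroup.closure (S : Set H)).topologicalClosure = ⊤} = 1 := hHt
      rw [hs1] at hm
      obtain ⟨S0, hS0, hS0d⟩ := hm
      obtain ⟨h, rfl⟩ := Finset.card_eq_one.mp hS0
      rw [Finset.coe_singleton] at hS0d
      exact Pro3Aux.notcyclic eA heA heA' ‹_› ‹_› hHA hHo h hS0d
    have hle : sInf {n | ∃ H : Subgroup G, IsOpen (H : Set G) ∧ Uniform 3 H ∧ topGen H = n}
        ≤ 2 := Nat.sInf_le hdmem2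
    have hne : {n | ∃ H : Subgroup G, IsOpen (H : Set G)
        ∧ Uniform 3 H ∧ topGen H = n}.Nonempty := ⟨2, hdmem2⟩
    have hm := Nat.sInf_mem hne
    show sInf {n | ∃ H : Subgroup G, IsOpen (H : Set G) ∧ Uniform 3 H ∧ topGen H = n} = 2
    set m := sInf {n | ∃ H : Subgroup G, IsOpen (H : Set G) ∧ Uniform 3 H ∧ topGen H = n}
      with hmdef
    have h0' : m ≠ 0 := fun h => hdnot0 (h ▸ hm)
    have h1' : m ≠ 1 := fun h => hdnot1 (h ▸ hm)
    omega
  · -- not Powerful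
    intro hpow
    unfold Powerful at hpow
    rw [if_neg (by norm_num : ¬((3:ℕ) = 2))] at hpow
    set K0 : Subgroup A :=
      { carrier := {b : A | ∃ v : ℤ_[3] × ℤ_[3], (3:ℤ_[3]) • v = Multiplicative.toAdd (eA b)},
        one_mem' := ⟨0, by rw [smul_zero, map_one, toAdd_one]⟩,
        mul_mem' := by
          rintro a b ⟨v, hv⟩ ⟨u, hu⟩
          exact ⟨v + u, by rw [smul_add, hv, hu, map_mul, toAdd_mul]⟩,
        inv_mem' := by
          rintro a ⟨v, hv⟩
          exact ⟨-v, by rw [smul_neg, hv, map_inv, toAdd_inv]⟩ } with hK0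
    set K : Subgroup G := K0.map A.subtype with hK
    haveI : CompactSpace A := isCompact_iff_compactSpace.mp hAcl.isCompact
    have hK0cl : IsClosed (K0 : Set A) := by
      have hset : (K0 : Set A) = (⇑eA) ⁻¹' (Set.range (fun v : ℤ_[3] × ℤ_[3] =>
          (Multiplicative.ofAdd ((3:ℤ_[3]) • v) : Pro3Aux.M3))) := by
        ext b
        constructor
        · rintro ⟨v, hv⟩
          refine ⟨v, ?_⟩
          show Multiplicative.ofAdd ((3:ℤ_[3]) • v) = eA b
          rw [hv, ofAdd_toAdd]
        · rintro ⟨v, hv⟩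
          refine ⟨v, ?_⟩
          rw [← hv]
          simp
      rw [hset]
      refine IsClosed.preimage heA ?_
      exact (isCompact_range (continuous_ofAdd.comp (continuous_const_smul _))).isClosed
    have hKcl : IsClosed (K : Set G) := by
      have h35 : (K : Set G) = Subtype.val '' (K0 : Set A) := rfl
      rw [h35]
      exact ((hK0cl.isCompact).image continuous_subtype_val).isClosed
    have hcubes : ∀ g : G, g ^ 3 ∈ K := by
      intro g
      obtain ⟨j, a, hj, ha, rfl⟩ := Pro3Aux.decomp hA hz3 hsup g
      rcases (by omega : j = 0 ∨ j = 1 ∨ j = 2) with rfl | rfl | rfl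
      · rw [pow_zero, one_mul]
        refine ⟨(⟨a, ha⟩ : A) ^ 3, ⟨Multiplicative.toAdd (eA ⟨a, ha⟩), ?_⟩, by simp⟩
        rw [map_pow, toAdd_pow, show ((3:ℤ_[3]) = ((3:ℕ):ℤ_[3])) by norm_num,
          Nat.cast_smul_eq_nsmul]
      · rw [Pro3Aux.cube_form hA eA hz3 hact 1 a ha (Or.inl rfl)]; exact K.one_mem
      · rw [Pro3Aux.cube_form hA eA hz3 hact 2 a ha (Or.inr rfl)]; exact K.one_mem
    have hppow : pPow 3 G ≤ K := by
      unfold pPow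
      refine Subgroup.topologicalClosure_minimal _ ((Subgroup.closure_le _).mpr ?_) hKcl
      rintro x ⟨g, rfl⟩
      exact hcubes g
    have hcmem : z * ↑a0 * z⁻¹ * (↑a0 : G)⁻¹ ∈ commutator G := by
      rw [commutator_def]
      have h36 :=
        Subgroup.commutator_mem_commutator (Subgroup.mem_top z) (Subgroup.mem_top (↑a0 : G))
      rwa [commutatorElement_def] at h36
    have hcK : z * ↑a0 * z⁻¹ * (↑a0 : G)⁻¹ ∈ K :=
      hppow (hpow (Subgroup.le_topologicalClosure _ hcmem))
    obtain ⟨b, hb, hbv⟩ := Subgroup.mem_map.mp hcK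
    have hbeq : b = ⟨z * ↑a0 * z⁻¹, hb1mem⟩ * a0⁻¹ := by
      apply Subtype.ext
      simpa using hbv
    obtain ⟨v, hv⟩ := hb
    rw [hbeq, map_mul, map_inv, e_b1, ea0] at hv
    have hv1 : (3:ℤ_[3]) * v.1 = -1 := by
      have h29 := congrArg Prod.fst hv
      simp only [hg1, hg2, toAdd_mul, toAdd_inv, toAdd_ofAdd, Prod.fst_add, Prod.fst_neg,
        Prod.smul_fst, smul_eq_mul, zero_add] at h29
      exact h29
    have h30 : PadicInt.toZMod ((3:ℤ_[3]) * v.1) = PadicInt.toZMod (-1 : ℤ_[3]) := by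
      rw [hv1]
    rw [map_mul, map_neg, map_one] at h30
    have h31 : PadicInt.toZMod (3:ℤ_[3]) = 0 := by
      rw [show (3:ℤ_[3]) = ((3:ℕ):ℤ_[3]) by norm_num, map_natCast]
      decide
    rw [h31, zero_mul] at h30
    exact (by decide : (0 : ZMod 3) ≠ -1) h30
end

section
/- Let p ≥ 3, and let H be a just-infinite pro-3 group with a self-centralizing open normal subgroup A ≅ Z_3² such that H/A is nontrivial and embeds in a Sylow pro-3 subgroup of GL_2(Z_3) acting without nonzero fixed points on A. If d(H) = 2, then H ≅ ⟨z⟩ ⋉ Z_3[ξ] where z has order 3 acting as multiplication by a primitive cube root of unity ξ. -/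
open scoped Pointwise

/-- Just-infinite: infinite, and every nontrivial closed normal subgroup has finite index. -/
def JustInfinite (G : Type*) [Group G] [TopologicalSpace G] : Prop :=
  Infinite G ∧ ∀ N : Subgroup G, N.Normal → IsClosed (N : Set G) → N ≠ ⊥ → N.FiniteIndex

lemma padic3_three_mul_ne_one (x : ℤ_[3]) : 3 * x ≠ 1 := by
  intro h
  have h3 : ‖(3 : ℤ_[3])‖ = (3:ℝ)⁻¹ := by
    have := @PadicInt.norm_p 3 ⟨by norm_num⟩
    norm_num at this ⊢
    exact_mod_cast this
  have : ‖(3:ℤ_[3]) * x‖ ≤ (3:ℝ)⁻¹ := by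
    rw [norm_mul, h3]
    calc (3:ℝ)⁻¹ * ‖x‖ ≤ (3:ℝ)⁻¹ * 1 := by
          apply mul_le_mul_of_nonneg_left (PadicInt.norm_le_one x); norm_num
      _ = (3:ℝ)⁻¹ := mul_one _
  rw [h, norm_one] at this
  norm_num at this

lemma padic3_quad_ne_zero (c : ℤ_[3]) : c^2 + c + 1 ≠ 0 := by
  intro h
  -- residue: c ≡ 1 mod 3
  have hres : (PadicInt.toZMod (c - 1) : ZMod 3) = 0 := by
    have h1 : (PadicInt.toZMod c)^2 + PadicInt.toZMod c + 1 = (0 : ZMod 3) := by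
      have := congrArg (PadicInt.toZMod (p := 3)) h
      simpa using this
    have : PadicInt.toZMod c = (1 : ZMod 3) := by
      revert h1; generalize PadicInt.toZMod c = t; revert t; decide
    simp [map_sub, this]
  have hmem : c - 1 ∈ RingHom.ker (PadicInt.toZMod (p := 3)) := hres
  rw [PadicInt.ker_toZMod, PadicInt.maximalIdeal_eq_span_p, Ideal.mem_span_singleton] at hmem
  obtain ⟨s, hs⟩ := hmem
  have hc : c = 1 + 3 * s := by
    have : c - 1 = 3 * s := by rw [hs]; ring
    linear_combination this
  rw [hc] at h
  have h3 : (3:ℤ_[3]) * (1 + 3*s + 3*s^2) = 0 := by ring_nf; ring_nf at h; linear_combination h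
  have h9 : (1 + 3*s + 3*s^2 : ℤ_[3]) = 0 := by
    rcases mul_eq_zero.mp h3 with h' | h'
    · exfalso; exact (by norm_num : (3:ℤ_[3]) ≠ 0) h'
    · exact h'
  exact padic3_three_mul_ne_one (-(s + s^2)) (by linear_combination -h9)

lemma padic3_cube_eq_one (c : ℤ_[3]) (h : c^3 = 1) : c = 1 := by
  have : (c - 1) * (c^2 + c + 1) = 0 := by linear_combination h
  rcases mul_eq_zero.mp this with h' | h'
  · linear_combination h'
  · exact absurd h' (padic3_quad_ne_zero c)

lemma padic3_eq_zero_of_forall_dvd (x : ℤ_[3]) (h : ∀ n : ℕ, ∃ y, x = 3^n * y) : x = 0 := by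
  by_contra hx
  have hpos : 0 < ‖x‖ := norm_pos_iff.mpr hx
  obtain ⟨n, hn⟩ := exists_pow_lt_of_lt_one hpos (by norm_num : ((3:ℝ)⁻¹) < 1)
  obtain ⟨y, hy⟩ := h n
  have h3 : ‖(3 : ℤ_[3])‖ = (3:ℝ)⁻¹ := by
    have := @PadicInt.norm_p 3 ⟨by norm_num⟩
    norm_num at this ⊢
    exact_mod_cast this
  have : ‖x‖ ≤ ((3:ℝ)⁻¹)^n := by
    rw [hy, norm_mul, norm_pow, h3]
    calc ((3:ℝ)⁻¹)^n * ‖y‖ ≤ ((3:ℝ)⁻¹)^n * 1 := by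
          apply mul_le_mul_of_nonneg_left (PadicInt.norm_le_one y); positivity
      _ = _ := mul_one _
  linarith



/-- Multiplication in `ℤ₃[σ]` with `σ² = -1 - σ`, on coordinate pairs. -/
noncomputable def pmul (p q : ℤ_[3] × ℤ_[3]) : ℤ_[3] × ℤ_[3] :=
  (p.1*q.1 - p.2*q.2, p.1*q.2 + p.2*q.1 - p.2*q.2)

lemma pcube (p : ℤ_[3] × ℤ_[3]) :
    pmul p (pmul p p) = (p.1^3 + p.2^3 - 3*p.1*p.2^2, 3*p.1^2*p.2 - 3*p.1*p.2^2) := by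
  simp only [pmul, Prod.mk.injEq]
  constructor <;> ring

lemma pcube_eq_one (p : ℤ_[3] × ℤ_[3]) (h : pmul p (pmul p p) = (1,0)) :
    p = (1,0) ∨ p = (0,1) ∨ p = (-1,-1) := by
  rw [pcube, Prod.mk.injEq] at h
  obtain ⟨h1, h2⟩ := h
  have h2' : (3:ℤ_[3]) * (p.1 * p.2 * (p.1 - p.2)) = 0 := by linear_combination h2
  have h3 : (3:ℤ_[3]) ≠ 0 := by norm_num
  have := mul_eq_zero.mp h2'
  rcases this with h' | h'
  · exact absurd h' h3
  rcases mul_eq_zero.mp h' with h' | h'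
  · rcases mul_eq_zero.mp h' with ha | hb
    · -- p.1 = 0 : p.2³ = 1
      right; left
      have : p.2^3 = 1 := by rw [ha] at h1; linear_combination h1
      have := padic3_cube_eq_one _ this
      exact Prod.ext ha this
    · -- p.2 = 0 : p.1³ = 1
      left
      have : p.1^3 = 1 := by rw [hb] at h1; linear_combination h1
      have := padic3_cube_eq_one _ this
      exact Prod.ext this hb
  · -- p.1 = p.2 : -p.1³ = 1
    right; right
    have hab : p.1 = p.2 := by linear_combination h'
    have : (-p.1)^3 = 1 := by rw [← hab] at h1; linear_combination h1
    have h4 := padic3_cube_eq_one _ this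
    have h5 : p.1 = -1 := by linear_combination -h4
    exact Prod.ext h5 (by rw [← hab]; exact h5)

lemma pcube_ne_sigma (p : ℤ_[3] × ℤ_[3]) : pmul p (pmul p p) ≠ (0,1) := by
  rw [pcube]
  intro h
  have h2 := congrArg Prod.snd h
  simp only at h2
  exact padic3_three_mul_ne_one (p.1^2*p.2 - p.1*p.2^2) (by linear_combination h2)

lemma pcube_ne_sigma2 (p : ℤ_[3] × ℤ_[3]) : pmul p (pmul p p) ≠ (-1,-1) := by
  rw [pcube]
  intro h
  have h2 := congrArg Prod.snd h
  simp only at h2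
  exact padic3_three_mul_ne_one (-(p.1^2*p.2 - p.1*p.2^2)) (by linear_combination -h2)

lemma padic3_not_unit (x : ℤ_[3]) (h : ¬ IsUnit x) : ∃ y, x = 3 * y := by
  have := PadicInt.not_isUnit_iff.mp h
  have hdvd : ((3:ℕ):ℤ_[3]) ∣ x := (PadicInt.norm_lt_one_iff_dvd x).mp this
  obtain ⟨y, hy⟩ := hdvd
  exact ⟨y, by exact_mod_cast hy⟩

lemma pmul_rc (p : ℤ_[3] × ℤ_[3]) : pmul (pmul p p) p = pmul p (pmul p p) := by
  simp only [pmul, Prod.mk.injEq]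
  constructor <;> ring


section ConjMap

variable {H : Type*} [Group H] (A : Subgroup H) (hA : A.Normal)
  (eA : A ≃* Multiplicative (ℤ_[3] × ℤ_[3]))

/-- The conjugation action transported to `ℤ₃²`. -/
noncomputable def conjMap (h : H) (m : ℤ_[3] × ℤ_[3]) : ℤ_[3] × ℤ_[3] :=
  Multiplicative.toAdd (eA ⟨h * (eA.symm (Multiplicative.ofAdd m) : A) * h⁻¹,
    hA.conj_mem _ (eA.symm (Multiplicative.ofAdd m)).2 h⟩)

variable {A hA eA}

lemma conjMap_eA (h : H) (a : A) :
    conjMap A hA eA h (Multiplicative.toAdd (eA a)) =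
      Multiplicative.toAdd (eA ⟨h * a * h⁻¹, hA.conj_mem a a.2 h⟩) := by
  simp only [conjMap, ofAdd_toAdd, MulEquiv.symm_apply_apply]

lemma conjMap_add (h : H) (m n : ℤ_[3] × ℤ_[3]) :
    conjMap A hA eA h (m + n) = conjMap A hA eA h m + conjMap A hA eA h n := by
  simp only [conjMap]
  rw [← toAdd_mul, ← map_mul]
  refine congrArg _ (congrArg _ (Subtype.ext ?_))
  push_cast
  have : eA.symm (Multiplicative.ofAdd (m + n)) =
      eA.symm (Multiplicative.ofAdd m) * eA.symm (Multiplicative.ofAdd n) := by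
    rw [← map_mul]; congr 1
  rw [this]
  push_cast
  group

lemma conjMap_comp (g h : H) (m : ℤ_[3] × ℤ_[3]) :
    conjMap A hA eA g (conjMap A hA eA h m) = conjMap A hA eA (g * h) m := by
  simp only [conjMap, ofAdd_toAdd, MulEquiv.symm_apply_apply]
  refine congrArg _ (congrArg _ (Subtype.ext ?_))
  push_cast
  group

lemma conjMap_mem {h : H} (hh : h ∈ A) (m : ℤ_[3] × ℤ_[3]) : conjMap A hA eA h m = m := by
  have hAcomm : ∀ x y : A, x * y = y * x := by
    intro x y
    apply eA.injective
    rw [map_mul, map_mul, mul_comm]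
  simp only [conjMap]
  have hval : (⟨h * (eA.symm (Multiplicative.ofAdd m) : A) * h⁻¹,
      hA.conj_mem _ (eA.symm (Multiplicative.ofAdd m)).2 h⟩ : A) =
      eA.symm (Multiplicative.ofAdd m) := by
    apply Subtype.ext
    have := hAcomm ⟨h, hh⟩ (eA.symm (Multiplicative.ofAdd m))
    have h2 : h * (eA.symm (Multiplicative.ofAdd m) : H) =
        (eA.symm (Multiplicative.ofAdd m) : H) * h := congrArg Subtype.val this
    push_cast
    rw [h2]
    group
  rw [hval, MulEquiv.apply_symm_apply, toAdd_ofAdd]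

lemma conjMap_id_imp (hself : Subgroup.centralizer (A : Set H) = A) {h : H}
    (hid : ∀ m, conjMap A hA eA h m = m) : h ∈ A := by
  rw [← hself]
  rw [Subgroup.mem_centralizer_iff]
  intro g hg
  have := hid (Multiplicative.toAdd (eA ⟨g, hg⟩))
  rw [conjMap_eA] at this
  have := Multiplicative.toAdd.injective this
  have := eA.injective this
  have hval : h * g * h⁻¹ = g := congrArg Subtype.val this
  calc g * h = (h * g * h⁻¹) * h := by rw [hval]
    _ = h * g := by group

lemma conjMap_fpf (hfpf : ∀ h : H, h ∉ A → ∀ a ∈ A, h * a * h⁻¹ = a → a = 1)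
    {h : H} (hh : h ∉ A) {m : ℤ_[3] × ℤ_[3]} (hm : conjMap A hA eA h m = m) : m = 0 := by
  set a : A := eA.symm (Multiplicative.ofAdd m) with ha
  have hm' : conjMap A hA eA h (Multiplicative.toAdd (eA a)) = Multiplicative.toAdd (eA a) := by
    rw [ha, MulEquiv.apply_symm_apply, toAdd_ofAdd]
    exact hm
  rw [conjMap_eA] at hm'
  have := eA.injective (Multiplicative.toAdd.injective hm')
  have hval : h * a * h⁻¹ = a := congrArg Subtype.val this
  have ha1 : (a : H) = 1 := hfpf h hh a a.2 hval
  have : a = (1 : A) := Subtype.ext ha1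
  have : Multiplicative.ofAdd m = 1 := by
    rw [ha] at this
    have := congrArg eA this
    rwa [MulEquiv.apply_symm_apply, map_one] at this
  simpa using congrArg Multiplicative.toAdd this

lemma conjMap_zero (h : H) : conjMap A hA eA h 0 = 0 := by
  have := conjMap_add (hA := hA) (eA := eA) h 0 0
  simp only [add_zero] at this
  exact add_eq_left.mp this.symm

lemma conjMap_nsmul (h : H) (n : ℕ) (m : ℤ_[3] × ℤ_[3]) :
    conjMap A hA eA h (n • m) = n • conjMap A hA eA h m := by
  induction n with
  | zero => simpa using conjMap_zero (hA := hA) (eA := eA) h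
  | succ n ih => rw [succ_nsmul, succ_nsmul, conjMap_add, ih]

lemma conjMap_sub (h : H) (m n : ℤ_[3] × ℤ_[3]) :
    conjMap A hA eA h (m - n) = conjMap A hA eA h m - conjMap A hA eA h n := by
  have := conjMap_add (hA := hA) (eA := eA) h (m - n) n
  rw [sub_add_cancel] at this
  linear_combination -this

lemma conjMap_smul (h : H) (c : ℤ_[3]) (m : ℤ_[3] × ℤ_[3]) :
    conjMap A hA eA h (c • m) = c • conjMap A hA eA h m := by
  have key : ∀ n : ℕ, ∃ w : ℤ_[3] × ℤ_[3],
      conjMap A hA eA h (c • m) - c • conjMap A hA eA h m = (3:ℤ_[3])^n • w := by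
    intro n
    obtain ⟨y, hy⟩ : ∃ y, c - (c.appr n : ℤ_[3]) = 3^n * y := by
      have := PadicInt.appr_spec n c
      rw [Ideal.mem_span_singleton] at this
      obtain ⟨y, hy⟩ := this
      exact ⟨y, by exact_mod_cast hy⟩
    refine ⟨conjMap A hA eA h (y • m) - y • conjMap A hA eA h m, ?_⟩
    have hpow : ∀ v : ℤ_[3] × ℤ_[3], (3:ℤ_[3])^n • v = (3^n : ℕ) • v := by
      intro v
      rw [← Nat.cast_smul_eq_nsmul (ℤ_[3])]
      norm_num
    have hsplit : c • m = ((c.appr n : ℤ_[3])) • m + ((3:ℤ_[3])^n * y) • m := by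
      rw [← add_smul]
      congr 1
      linear_combination hy
    have e1 : ∀ v : ℤ_[3] × ℤ_[3], conjMap A hA eA h ((c.appr n : ℤ_[3]) • v)
        = (c.appr n : ℤ_[3]) • conjMap A hA eA h v := by
      intro v
      rw [Nat.cast_smul_eq_nsmul, conjMap_nsmul, ← Nat.cast_smul_eq_nsmul (ℤ_[3])]
    have e2 : ∀ v : ℤ_[3] × ℤ_[3], conjMap A hA eA h (((3:ℤ_[3])^n * y) • v)
        = (3:ℤ_[3])^n • conjMap A hA eA h (y • v) := by
      intro v
      rw [mul_smul, hpow, conjMap_nsmul, ← hpow]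
    have hc2 : c • conjMap A hA eA h m
        = ((c.appr n : ℤ_[3])) • conjMap A hA eA h m
          + (3:ℤ_[3])^n • (y • conjMap A hA eA h m) := by
      rw [smul_smul, ← add_smul]
      congr 1
      linear_combination hy
    rw [hsplit, conjMap_add, e1, e2, hc2, smul_sub]
    abel
  set D := conjMap A hA eA h (c • m) - c • conjMap A hA eA h m with hD
  have hD1 : D.1 = 0 := by
    apply padic3_eq_zero_of_forall_dvd
    intro n
    obtain ⟨w, hw⟩ := key n
    exact ⟨w.1, by rw [hD] at hw ⊢; rw [hw]; rfl⟩
  have hD2 : D.2 = 0 := by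
    apply padic3_eq_zero_of_forall_dvd
    intro n
    obtain ⟨w, hw⟩ := key n
    exact ⟨w.2, by rw [hD] at hw ⊢; rw [hw]; rfl⟩
  have : D = 0 := Prod.ext hD1 hD2
  rw [hD] at this
  linear_combination this

end ConjMap

/-- Claim in the proof of Theorem 1.3: a just-infinite pro-`3` group `H` with a
self-centralising open normal subgroup `A ≅ ℤ₃²` on which the nontrivial quotient `H/A` acts
without nonzero fixed points, and with `d(H) = 2`, is isomorphic to `⟨z⟩ ⋉ ℤ₃[ξ]` with
`z` of order `3` acting as multiplication by a primitive cube root of unity `ξ`. -/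
theorem justInfinite_pro3_structure
    (H : Type*) [Group H] [TopologicalSpace H] [IsTopologicalGroup H]
    (hpro : IsProP 3 H) (hji : JustInfinite H)
    (A : Subgroup H) (hA : A.Normal) (hAopen : IsOpen (A : Set H))
    (eA : A ≃* Multiplicative (ℤ_[3] × ℤ_[3]))
    (heA : Continuous eA) (heA' : Continuous eA.symm)
    (hself : Subgroup.centralizer (A : Set H) = A)
    (hne : A ≠ ⊤)
    (hfpf : ∀ h : H, h ∉ A → ∀ a ∈ A, h * a * h⁻¹ = a → a = 1)
    (hd : topGen H = 2) :
    ∃ z : H, z ≠ 1 ∧ z ^ 3 = 1 ∧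
      Subgroup.closure {z} ⊔ A = ⊤ ∧ Subgroup.closure {z} ⊓ A = ⊥ ∧
      ∃ e : A ≃* Multiplicative (ℤ_[3] × ℤ_[3]), Continuous e ∧ Continuous e.symm ∧
        ∀ a : A, e ⟨z * a * z⁻¹, hA.conj_mem a a.2 z⟩ =
          Multiplicative.ofAdd (-(Multiplicative.toAdd (e a)).2,
            (Multiplicative.toAdd (e a)).1 - (Multiplicative.toAdd (e a)).2) := by

  classical
  haveI : Fact (Nat.Prime 3) := ⟨by norm_num⟩
  obtain ⟨k, hk⟩ := hpro.2.2.2 A hA hAopen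
  haveI hAfi : A.FiniteIndex := ⟨by rw [hk]; positivity⟩
  have hcardQ : Nat.card (H ⧸ A) = 3^k := by rw [← Subgroup.index_eq_card, hk]
  haveI hQfin : Finite (H ⧸ A) := Nat.finite_of_card_ne_zero (by rw [hcardQ]; positivity)
  have hk1 : 1 ≤ k := by
    rcases Nat.eq_zero_or_pos k with h0 | h1
    · exfalso; apply hne; rw [← Subgroup.index_eq_one, hk, h0, pow_zero]
    · exact h1
  haveI hQnt : Nontrivial (H ⧸ A) := by
    rw [← Finite.one_lt_card_iff_nontrivial, hcardQ]
    calc 1 < 3 := by norm_num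
      _ ≤ 3^k := Nat.le_self_pow (by omega) 3
  have hp : IsPGroup 3 (H ⧸ A) := IsPGroup.of_card hcardQ
  haveI := hp.center_nontrivial
  obtain ⟨c, hc⟩ := exists_ne (1 : Subgroup.center (H ⧸ A))
  have hq1 : (c : H ⧸ A) ≠ 1 := by
    intro h; exact hc (Subtype.ext h)
  obtain ⟨n₀, hn₀⟩ := hp (c : H ⧸ A)
  -- minimal m with c^(3^m) = 1
  have hex : ∃ n, (c : H ⧸ A)^(3:ℕ)^n = 1 := ⟨n₀, hn₀⟩
  set m := Nat.find hex with hm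
  have hm1 : 1 ≤ m := by
    rcases Nat.eq_zero_or_pos m with h0 | h1
    · exfalso
      have := Nat.find_spec hex
      rw [← hm, h0, pow_zero, pow_one] at this
      exact hq1 this
    · exact h1
  set q' : H ⧸ A := (c : H ⧸ A)^(3:ℕ)^(m-1) with hq'
  have hq'ne : q' ≠ 1 := by
    intro h
    have := Nat.find_min hex (m := m - 1) (by omega)
    exact this h
  have hq'3 : q'^(3:ℕ) = 1 := by
    rw [hq', ← pow_mul, ← pow_succ]
    have : m - 1 + 1 = m := by omega
    rw [this]
    exact Nat.find_spec hex
  have hq'cen : ∀ x : H ⧸ A, x * q' = q' * x := by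
    intro x
    have := c.2
    rw [Subgroup.mem_center_iff] at this
    rw [hq']
    induction ((3:ℕ)^(m-1)) with
    | zero => simp
    | succ n ih =>
        rw [pow_succ, ← mul_assoc, ih, mul_assoc, this x, mul_assoc]
  obtain ⟨z, hz⟩ := QuotientGroup.mk_surjective q'
  have hzA : z ∉ A := by
    intro h
    exact hq'ne (by rw [← hz]; exact (QuotientGroup.eq_one_iff z).mpr h)
  have hz3A : z^(3:ℕ) ∈ A := by
    rw [← QuotientGroup.eq_one_iff]
    show (QuotientGroup.mk (z^(3:ℕ)) : H ⧸ A) = 1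
    rw [← hz] at hq'3
    exact hq'3
  have hz3 : z^(3:ℕ) = 1 := by
    have := hfpf z hzA (z^3) hz3A (by group)
    exact this
  have hcen : ∀ g : H, ∃ a ∈ A, g * z * g⁻¹ = z * a := by
    intro g
    refine ⟨z⁻¹ * (g * z * g⁻¹), ?_, by group⟩
    rw [← QuotientGroup.eq_one_iff]
    show (QuotientGroup.mk (z⁻¹ * (g * z * g⁻¹)) : H ⧸ A) = 1
    have : (QuotientGroup.mk (z⁻¹ * (g * z * g⁻¹)) : H ⧸ A)
        = q'⁻¹ * (QuotientGroup.mk g * q' * (QuotientGroup.mk g)⁻¹) := by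
      rw [← hz]; rfl
    rw [this, hq'cen (QuotientGroup.mk g)]
    group
  -- Part B: the action σ of z
  obtain ⟨σ, hσdef⟩ : ∃ σ, σ = conjMap A hA eA z := ⟨_, rfl⟩
  have hσadd : ∀ a b, σ (a + b) = σ a + σ b := fun a b => by
    rw [hσdef]; exact conjMap_add z a b
  have hσsmul : ∀ (c : ℤ_[3]) x, σ (c • x) = c • σ x := fun c x => by
    rw [hσdef]; exact conjMap_smul z c x
  have hσfpf : ∀ {x}, σ x = x → x = 0 := by
    intro x hx
    rw [hσdef] at hx
    exact conjMap_fpf (hA := hA) (eA := eA) hfpf hzA hx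
  have hσ3 : ∀ x, σ (σ (σ x)) = x := by
    intro x
    rw [hσdef]
    rw [conjMap_comp, conjMap_comp]
    have h1 : z * z * z = z^3 := by rw [pow_succ, pow_succ, pow_one]
    rw [h1, hz3]
    exact conjMap_mem (one_mem A) x
  have hσquad : ∀ x, σ (σ x) + σ x + x = 0 := by
    intro x
    have hfix : σ (σ (σ x) + σ x + x) = σ (σ x) + σ x + x := by
      rw [hσadd, hσadd, hσ3 x]
      abel
    exact hσfpf hfix
  have hσcomm : ∀ g x, conjMap A hA eA g (σ x) = σ (conjMap A hA eA g x) := by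
    intro g x
    obtain ⟨a, haA, hga⟩ := hcen g
    have h1 : g * z = (z * a) * g := by rw [← hga]; group
    rw [hσdef]
    rw [conjMap_comp, h1, ← conjMap_comp, ← conjMap_comp, conjMap_mem haA]
  -- Part B2: find w with σ w - w not divisible by 3
  have hstep4 : ∃ w, ¬ ∃ u, σ w - w = (3:ℤ_[3]) • u := by
    by_contra hall
    push_neg at hall
    obtain ⟨u, hu⟩ := hall ((1:ℤ_[3]), (0:ℤ_[3]))
    obtain ⟨u', hu'⟩ := hall u
    have h1 : σ ((1:ℤ_[3]), (0:ℤ_[3])) = (3:ℤ_[3]) • u + ((1:ℤ_[3]), (0:ℤ_[3])) := by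
      rw [← hu]; abel
    have h2 : σ u = (3:ℤ_[3]) • u' + u := by rw [← hu']; abel
    have hq := hσquad ((1:ℤ_[3]), (0:ℤ_[3]))
    rw [h1, hσadd, hσsmul, h2, h1] at hq
    have E1 := congrArg Prod.fst hq
    simp only [Prod.fst_add, Prod.smul_fst, smul_eq_mul, Prod.fst_zero] at E1
    have hX : (3:ℤ_[3]) * (1 + 3*u.1 + 3*u'.1) = 0 := by linear_combination E1
    have hX0 : (1:ℤ_[3]) + 3*u.1 + 3*u'.1 = 0 := by
      rcases mul_eq_zero.mp hX with h' | h'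
      · exact absurd h' (by norm_num)
      · exact h'
    exact padic3_three_mul_ne_one (-(u.1 + u'.1)) (by linear_combination -hX0)
  -- Part C
  obtain ⟨w, hw⟩ := hstep4
  have hquadx : ∀ x, σ (σ x) = -σ x - x := by
    intro x
    have := hσquad x
    linear_combination (norm := module) this
  have keyc : ∀ (c : ℤ_[3]) (ee : ℤ_[3] × ℤ_[3]), σ w - c • w = (3:ℤ_[3]) • ee → False := by
    intro c ee hE
    obtain ⟨y, hy⟩ : ∃ y, c - (c.appr 1 : ℤ_[3]) = 3*y := by
      have h0 := PadicInt.appr_spec 1 c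
      rw [Ideal.mem_span_singleton] at h0
      obtain ⟨y, hy⟩ := h0
      refine ⟨y, ?_⟩
      rw [hy]
      norm_num
    have hsplit : c = ((c.appr 1 % 3 : ℕ) : ℤ_[3]) + 3 * (((c.appr 1 / 3 : ℕ) : ℤ_[3]) + y) := by
      have h30 : ((c.appr 1 : ℕ) : ℤ_[3]) = ((3 * (c.appr 1 / 3) + c.appr 1 % 3 : ℕ) : ℤ_[3]) := by
        rw [Nat.div_add_mod]
      push_cast at h30
      linear_combination hy + h30
    have hE2 : σ w - ((c.appr 1 % 3 : ℕ) : ℤ_[3]) • w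
        = (3:ℤ_[3]) • (ee + (((c.appr 1 / 3 : ℕ) : ℤ_[3]) + y) • w) := by
      rw [hsplit] at hE
      linear_combination (norm := module) hE
    have hr : c.appr 1 % 3 = 0 ∨ c.appr 1 % 3 = 1 ∨ c.appr 1 % 3 = 2 := by omega
    set E := ee + (((c.appr 1 / 3 : ℕ) : ℤ_[3]) + y) • w with hEdef
    rcases hr with h | h | h
    · rw [h] at hE2
      simp only [Nat.cast_zero, zero_smul, sub_zero] at hE2
      have hw3 : w = (3:ℤ_[3]) • σ (σ E) := by
        conv_lhs => rw [← hσ3 w, hE2]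
        rw [hσsmul, hσsmul]
      refine hw ⟨E - σ (σ E), ?_⟩
      rw [hE2]
      conv_lhs => rw [hw3]
      module
    · rw [h] at hE2
      simp only [Nat.cast_one, one_smul] at hE2
      exact hw ⟨E, hE2⟩
    · rw [h] at hE2
      have hsum : σ w + w = (3:ℤ_[3]) • (E + w) := by
        push_cast at hE2
        linear_combination (norm := module) hE2
      have hmw : -w = (3:ℤ_[3]) • σ (E + w) := by
        rw [← hσsmul, ← hsum, hσadd, hquadx]
        module
      have hσzero : σ 0 = 0 := by
        have := hσadd 0 0
        simp only [add_zero] at this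
        exact (add_eq_left.mp this.symm)
      have hσneg : ∀ x, σ (-x) = - σ x := by
        intro x
        have := hσadd x (-x)
        simp only [add_neg_cancel, hσzero] at this
        linear_combination (norm := module) -this
      have hww : w = (3:ℤ_[3]) • (- σ (E + w)) := by
        linear_combination (norm := module) -hmw
      refine hw ⟨- σ (σ (E + w)) + σ (E + w), ?_⟩
      conv_lhs => rw [hww, hσsmul, hσneg]
      module
  -- determinant is a unit
  have hdet : IsUnit (w.1 * (σ w).2 - w.2 * (σ w).1) := by
    by_contra hd
    obtain ⟨d₀, hd₀⟩ := padic3_not_unit _ hd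
    by_cases hw1 : IsUnit w.1
    · obtain ⟨t, ht⟩ : ∃ t, t * w.1 = 1 := by
        obtain ⟨u, hu⟩ := hw1
        exact ⟨↑u⁻¹, by rw [← hu]; exact u.inv_mul⟩
      refine keyc ((σ w).1 * t) (((0:ℤ_[3]), t * d₀)) ?_
      refine Prod.ext ?_ ?_ <;>
        simp only [Prod.fst_sub, Prod.snd_sub, Prod.smul_fst, Prod.smul_snd, smul_eq_mul]
      · linear_combination (-(σ w).1) * ht
      · linear_combination t * hd₀ - (σ w).2 * ht
    · by_cases hw2 : IsUnit w.2
      · obtain ⟨t, ht⟩ : ∃ t, t * w.2 = 1 := by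
          obtain ⟨u, hu⟩ := hw2
          exact ⟨↑u⁻¹, by rw [← hu]; exact u.inv_mul⟩
        refine keyc ((σ w).2 * t) ((-(t * d₀), (0:ℤ_[3]))) ?_
        refine Prod.ext ?_ ?_ <;>
          simp only [Prod.fst_sub, Prod.snd_sub, Prod.smul_fst, Prod.smul_snd, smul_eq_mul]
        · linear_combination (-t) * hd₀ - (σ w).1 * ht
        · linear_combination (-(σ w).2) * ht
      · obtain ⟨a1, ha1⟩ := padic3_not_unit _ hw1
        obtain ⟨a2, ha2⟩ := padic3_not_unit _ hw2
        refine hw ⟨σ (a1, a2) - (a1, a2), ?_⟩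
        have hww : w = (3:ℤ_[3]) • ((a1, a2) : ℤ_[3] × ℤ_[3]) := by
          refine Prod.ext ?_ ?_ <;> simp only [Prod.smul_fst, Prod.smul_snd, smul_eq_mul]
          · exact ha1
          · exact ha2
        conv_lhs => rw [hww, hσsmul]
        module
  obtain ⟨t, ht⟩ : ∃ t, t * (w.1 * (σ w).2 - w.2 * (σ w).1) = 1 := by
    obtain ⟨u, hu⟩ := hdet
    exact ⟨↑u⁻¹, by rw [← hu]; exact u.inv_mul⟩
  -- the basis change
  obtain ⟨Lam, hΛ⟩ : ∃ Lam : (ℤ_[3] × ℤ_[3]) → (ℤ_[3] × ℤ_[3]),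
      Lam = fun p => p.1 • w + p.2 • σ w := ⟨_, rfl⟩
  obtain ⟨Lami, hΛi⟩ : ∃ Lami : (ℤ_[3] × ℤ_[3]) → (ℤ_[3] × ℤ_[3]),
      Lami = fun x => (t * ((σ w).2 * x.1 - (σ w).1 * x.2), t * (w.1 * x.2 - w.2 * x.1)) :=
    ⟨_, rfl⟩
  have hΛleft : ∀ p, Lami (Lam p) = p := by
    intro p
    rw [hΛ, hΛi]
    refine Prod.ext ?_ ?_ <;>
      simp only [Prod.fst_add, Prod.snd_add, Prod.smul_fst, Prod.smul_snd, smul_eq_mul]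
    · linear_combination p.1 * ht
    · linear_combination p.2 * ht
  have hΛright : ∀ x, Lam (Lami x) = x := by
    intro x
    rw [hΛ, hΛi]
    refine Prod.ext ?_ ?_ <;>
      simp only [Prod.fst_add, Prod.snd_add, Prod.smul_fst, Prod.smul_snd, smul_eq_mul]
    · linear_combination x.1 * ht
    · linear_combination x.2 * ht
  have hσΛ : ∀ p, σ (Lam p) = Lam (-p.2, p.1 - p.2) := by
    intro p
    simp only [hΛ]
    rw [hσadd, hσsmul, hσsmul, hquadx]
    module
  -- Part D : the commutant and the index-3 property
  obtain ⟨Th, hΘ⟩ : ∃ Th : (ℤ_[3] × ℤ_[3]) → (ℤ_[3] × ℤ_[3]) → (ℤ_[3] × ℤ_[3]),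
      Th = fun p x => p.1 • x + p.2 • σ x := ⟨_, rfl⟩
  have hΘmul : ∀ p q x, Th p (Th q x) = Th (pmul p q) x := by
    intro p q x
    simp only [hΘ, pmul]
    rw [hσadd, hσsmul, hσsmul, hquadx]
    module
  have hΘdet : ∀ p q, Th p w = Th q w → p = q := by
    intro p q h
    have hL : Lam p = Lam q := by
      rw [hΛ]
      simp only [hΘ] at h
      exact h
    have := congrArg Lami hL
    rwa [hΛleft, hΛleft] at this
  have claim : ∀ n (p : ℤ_[3] × ℤ_[3]), (Th p)^[3^n] = id →
      p = (1,0) ∨ p = (0,1) ∨ p = (-1,-1) := by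
    intro n
    induction n with
    | zero =>
      intro p hp
      left
      apply hΘdet p (1,0)
      have h1 : Th p w = w := by
        have := congrFun hp w
        simpa using this
      rw [h1, hΘ]
      module
    | succ n ih =>
      intro p hp
      have h3 : (Th p)^[3] = Th (pmul p (pmul p p)) := by
        funext x
        show (Th p)^[2+1] x = _
        rw [Function.iterate_succ_apply', Function.iterate_succ_apply',
          Function.iterate_one]
        rw [hΘmul, hΘmul, pmul_rc]
      have hp' : (Th (pmul p (pmul p p)))^[3^n] = id := by
        rw [← h3, ← Function.iterate_mul, ← pow_succ']
        exact hp
      rcases ih _ hp' with h | h | h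
      · exact pcube_eq_one p h
      · exact absurd h (pcube_ne_sigma p)
      · exact absurd h (pcube_ne_sigma2 p)
  -- the sup property
  have hsup : Subgroup.closure {z} ⊔ A = ⊤ := by
    rw [eq_top_iff]
    intro g _
    obtain ⟨τ, hτdef⟩ : ∃ τ, τ = conjMap A hA eA g := ⟨_, rfl⟩
    have hτadd : ∀ x y', τ (x + y') = τ x + τ y' := fun x y' => by
      rw [hτdef]; exact conjMap_add g x y'
    have hτsmul : ∀ (c : ℤ_[3]) x, τ (c • x) = c • τ x := fun c x => by
      rw [hτdef]; exact conjMap_smul g c x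
    have hτσ : ∀ x, τ (σ x) = σ (τ x) := fun x => by
      rw [hτdef, hσdef]
      rw [hσdef] at hσcomm
      exact hσcomm g x
    set a : ℤ_[3] := (Lami (τ w)).1 with hadef
    set b : ℤ_[3] := (Lami (τ w)).2 with hbdef
    have hτw : τ w = a • w + b • σ w := by
      conv_lhs => rw [← hΛright (τ w)]
      rw [hΛ]
    have h3' : σ (τ w) = a • σ w + b • (-σ w - w) := by
      conv_lhs => rw [hτw]
      rw [hσadd, hσsmul, hσsmul, hquadx]
    have hτθ : ∀ x, τ x = Th (a, b) x := by
      intro x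
      obtain ⟨u, v, hx⟩ : ∃ u v, x = u • w + v • σ w :=
        ⟨(Lami x).1, (Lami x).2, by conv_lhs => rw [← hΛright x, hΛ]⟩
      rw [hΘ]
      simp only
      rw [hx, hτadd, hτsmul, hτsmul, hτσ, h3', hτw,
        hσadd, hσsmul, hσsmul, hquadx]
      module
    have hiter : (Th (a, b))^[3^k] = id := by
      have hiterτ : ∀ (n : ℕ) x, (Th (a, b))^[n] x = conjMap A hA eA (g^n) x := by
        intro n
        induction n with
        | zero =>
          intro x
          rw [Function.iterate_zero, pow_zero]
          exact (conjMap_mem (one_mem A) x).symm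
        | succ n ih =>
          intro x
          rw [Function.iterate_succ_apply', ← hτθ, hτdef, ih x, conjMap_comp, ← pow_succ']
      funext x
      rw [hiterτ (3^k) x]
      have hgk : g^(3^k) ∈ A := by
        rw [← hk]
        haveI : A.Normal := hA
        exact Subgroup.pow_index_mem A g
      rw [conjMap_mem hgk]
      rfl
    have hz_mem : z ∈ Subgroup.closure {z} ⊔ A :=
      Subgroup.mem_sup_left (Subgroup.subset_closure (Set.mem_singleton z))
    rcases claim k (a, b) hiter with h | h | h
    · -- τ = id
      have hid : ∀ x, conjMap A hA eA g x = x := by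
        intro x
        rw [← hτdef, hτθ, h, hΘ]
        module
      exact Subgroup.mem_sup_right (conjMap_id_imp hself hid)
    · -- τ = σ
      have hid : ∀ x, conjMap A hA eA (z⁻¹ * g) x = x := by
        intro x
        rw [← conjMap_comp]
        have hgx : conjMap A hA eA g x = σ x := by
          rw [← hτdef, hτθ, h, hΘ, hσdef]
          module
        rw [hgx, hσdef, conjMap_comp, inv_mul_cancel]
        exact conjMap_mem (one_mem A) x
      have hgA : z⁻¹ * g ∈ A := conjMap_id_imp hself hid
      have hg : g = z * (z⁻¹ * g) := by group
      rw [hg]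
      exact Subgroup.mul_mem _ hz_mem (Subgroup.mem_sup_right hgA)
    · -- τ = σ²
      have hid : ∀ x, conjMap A hA eA (z⁻¹ * (z⁻¹ * g)) x = x := by
        intro x
        rw [← conjMap_comp, ← conjMap_comp]
        have hgx : conjMap A hA eA g x = σ (σ x) := by
          rw [← hτdef, hτθ, h, hΘ, hquadx]
          module
        rw [hgx, hσdef, conjMap_comp, conjMap_comp, conjMap_comp]
        have hword : z⁻¹ * z⁻¹ * z * z = 1 := by group
        rw [hword]
        exact conjMap_mem (one_mem A) x
      have hgA : z⁻¹ * (z⁻¹ * g) ∈ A := conjMap_id_imp hself hid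
      have hg : g = z * (z * (z⁻¹ * (z⁻¹ * g))) := by group
      rw [hg]
      exact Subgroup.mul_mem _ hz_mem
        (Subgroup.mul_mem _ hz_mem (Subgroup.mem_sup_right hgA))
  -- Part E : the final equivalence
  have hΛiadd : ∀ x y', Lami (x + y') = Lami x + Lami y' := by
    intro x y'
    rw [hΛi]
    refine Prod.ext ?_ ?_ <;> simp only [Prod.fst_add, Prod.snd_add] <;> ring
  obtain ⟨ee, hee, hee'⟩ : ∃ ee : A ≃* Multiplicative (ℤ_[3] × ℤ_[3]),
      (∀ x : A, ee x = Multiplicative.ofAdd (Lami (Multiplicative.toAdd (eA x)))) ∧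
      (∀ y, ee.symm y = eA.symm (Multiplicative.ofAdd (Lam (Multiplicative.toAdd y)))) :=
    ⟨eA.trans (AddEquiv.toMultiplicative ⟨⟨Lami, Lam, hΛright, hΛleft⟩, fun {x y} => hΛiadd x y⟩),
      fun x => rfl, fun y => rfl⟩
  have hLamicont : Continuous Lami := by
    rw [hΛi]
    fun_prop
  have hLamcont : Continuous Lam := by
    rw [hΛ]
    fun_prop
  have heecont : Continuous ee := by
    have h0 : ⇑ee = fun x : A => Multiplicative.ofAdd (Lami (Multiplicative.toAdd (eA x))) :=
      funext hee
    rw [h0]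
    exact continuous_ofAdd.comp (hLamicont.comp (continuous_toAdd.comp heA))
  have heecont' : Continuous ee.symm := by
    have h0 : ⇑ee.symm
        = fun y => eA.symm (Multiplicative.ofAdd (Lam (Multiplicative.toAdd y))) := funext hee'
    rw [h0]
    exact heA'.comp (continuous_ofAdd.comp (hLamcont.comp continuous_toAdd))
  have hformula : ∀ a : A, ee ⟨z * a * z⁻¹, hA.conj_mem a a.2 z⟩ =
      Multiplicative.ofAdd (-(Multiplicative.toAdd (ee a)).2,
        (Multiplicative.toAdd (ee a)).1 - (Multiplicative.toAdd (ee a)).2) := by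
    intro a
    rw [hee, hee]
    simp only [toAdd_ofAdd]
    have hconj : Multiplicative.toAdd (eA ⟨z * ↑a * z⁻¹, hA.conj_mem a a.2 z⟩)
        = σ (Multiplicative.toAdd (eA a)) := by
      rw [hσdef]
      exact (conjMap_eA z a).symm
    rw [hconj]
    conv_lhs => rw [← hΛright (Multiplicative.toAdd (eA a))]
    rw [hσΛ, hΛleft]
  have hzne : z ≠ 1 := fun h => hzA (h ▸ one_mem A)
  have hinf : Subgroup.closure {z} ⊓ A = ⊥ := by
    rw [eq_bot_iff]
    intro x hx
    rw [Subgroup.mem_inf] at hx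
    obtain ⟨hxz, hxA⟩ := hx
    rw [Subgroup.mem_closure_singleton] at hxz
    obtain ⟨n, hn⟩ := hxz
    have hz3' : z^(3:ℤ) = 1 := by
      rw [show (3:ℤ) = ((3:ℕ):ℤ) by norm_num, zpow_natCast, hz3]
    have hred : z ^ n = z ^ (n % 3) := by
      conv_lhs => rw [← Int.mul_ediv_add_emod n 3]
      rw [zpow_add, zpow_mul, hz3', one_zpow, one_mul]
    rcases (by omega : n % 3 = 0 ∨ n % 3 = 1 ∨ n % 3 = 2) with h | h | h
    · rw [Subgroup.mem_bot, ← hn, hred, h, zpow_zero]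
    · exfalso
      apply hzA
      rw [hred, h, zpow_one] at hn
      exact hn ▸ hxA
    · exfalso
      apply hzA
      rw [hred, h] at hn
      have h2 : z^(2:ℤ) = z * z := by
        rw [show (2:ℤ) = 1 + 1 by norm_num, zpow_add, zpow_one]
      rw [h2] at hn
      have hzz : z * z ∈ A := hn ▸ hxA
      have hone : (z * z) * z = 1 := by
        have h1 : z * z * z = z^3 := by rw [pow_succ, pow_succ, pow_one]
        rw [h1, hz3]
      have hz' : z = (z*z)⁻¹ := eq_inv_of_mul_eq_one_right hone
      rw [hz']
      exact A.inv_mem hzz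
  exact ⟨z, hzne, hz3, hsup, hinf, ee, heecont, heecont', hformula⟩
end
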